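/- arXiv:2109.05175 — 7 statements merged into one kernel-verified Lean document; each statement's English description precedes it below -/
import Mathlib

section
/- Let (Ω, F, P) be a probability space, X : Ω → 𝒳 a measurable map into a measurable space, and m = σ(X). Let D₁, D₀, Z¹, Z⁰ : Ω → {0,1} be measurable and Y₁, Y₀ ∈ L¹(P). Define D^k := Z^k·D₁ + (1−Z^k)·D₀ and Y^k := D^k·Y₁ + (1−D^k)·Y₀ for k = 0,1. Assume the pair (Z¹, Z⁰) is conditionally independent of the quadruple (Y₁, Y₀, D₁, D₀) given m, and D₁ ≥ D₀ almost surely. Then P-almost everywhere, (E[Y¹ | m] − E[Y⁰ | m]) · E[1{D₁ > D₀} | m] = (E[D¹ | m] − E[D⁰ | m]) · E[(Y₁ − Y₀)·1{D₁ > D₀} | m]. (In particular, wherever E[D¹|m] − E[D⁰|m] ≠ 0 and E[1{D₁>D₀}|m] ≠ 0, the local average treatment effect E[(Y₁−Y₀)·1{D₁>D₀}|m] / E[1{D₁>D₀}|m] equals (E[Y¹|m] − E[Y⁰|m]) / (E[D¹|m] − E[D⁰|m]).) -/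
open MeasureTheory ProbabilityTheory
open scoped ENNReal

section Aux

/-- Any bounded measurable real function is integrable w.r.t. a finite measure. -/
lemma integrable_of_bdd {Ω : Type*} [mΩ : MeasurableSpace Ω] {μ : Measure Ω}
    [IsFiniteMeasure μ] {f : Ω → ℝ} (hf : Measurable f) {C : ℝ}
    (h : ∀ ω, |f ω| ≤ C) : Integrable f μ :=
  ⟨hf.aestronglyMeasurable, HasFiniteIntegral.of_bounded (C := C) (ae_of_all _ h)⟩

/-- Self-adjointness of conditional expectation against bounded `m`-measurable weights. -/
lemma integral_mul_condexp_eq {Ω : Type*} {m : MeasurableSpace Ω} [mΩ : MeasurableSpace Ω]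
    {μ : Measure Ω} (hm : m ≤ mΩ) [IsFiniteMeasure μ]
    {M ψ : Ω → ℝ} (hM : StronglyMeasurable[m] M) {c : ℝ}
    (hMb : ∀ᵐ ω ∂μ, ‖M ω‖ ≤ c) (hψ : Integrable ψ μ) :
    ∫ ω, M ω * (μ[ψ|m]) ω ∂μ = ∫ ω, M ω * ψ ω ∂μ := by
  have hint : Integrable (fun ω => M ω * ψ ω) μ :=
    hψ.bdd_mul ((hM.mono hm).aestronglyMeasurable) hMb
  have hpull : μ[(fun ω => M ω * ψ ω)|m] =ᵐ[μ] fun ω => M ω * (μ[ψ|m]) ω :=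
    condExp_stronglyMeasurable_mul_of_bound hm hM hψ c hMb
  calc ∫ ω, M ω * (μ[ψ|m]) ω ∂μ = ∫ ω, (μ[(fun ω => M ω * ψ ω)|m]) ω ∂μ :=
        (integral_congr_ae hpull).symm
    _ = ∫ ω, M ω * ψ ω ∂μ := integral_condExp hm

/-- Conditional independence is stable under a.e. modification of the second function. -/
lemma condIndepFun_of_ae_eq_right
    {Ω γ δ : Type*} {m : MeasurableSpace Ω} [mΩ : MeasurableSpace Ω]
    [StandardBorelSpace Ω] [Nonempty Ω]
    [MeasurableSpace γ] [MeasurableSpace δ]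
    {μ : Measure Ω} [IsProbabilityMeasure μ] (hm : m ≤ mΩ)
    {Z : Ω → γ} {W W' : Ω → δ}
    (h : CondIndepFun m hm Z W μ) (hWW' : W =ᵐ[μ] W') :
    CondIndepFun m hm Z W' μ := by
  obtain ⟨N, hNsub, hNmeas, hNnull⟩ := exists_measurable_superset_of_null (ae_iff.mp hWW')
  have hind_zero : (N.indicator (fun _ => (1:ℝ))) =ᵐ[μ] (0 : Ω → ℝ) := by
    have hnm : ∀ᵐ ω ∂μ, ω ∉ N := measure_eq_zero_iff_ae_notMem.mp hNnull
    filter_upwards [hnm] with ω hω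
    simp [Set.indicator_of_notMem hω]
  have hcond : μ[N.indicator (fun _ => (1:ℝ))|m] =ᵐ[μ] (0 : Ω → ℝ) := by
    refine (condExp_congr_ae hind_zero).trans ?_
    rw [condExp_zero]
  have hker : ∀ᵐ ω ∂μ, condExpKernel μ m ω N = 0 := by
    filter_upwards [condExpKernel_ae_eq_condExp hm hNmeas, hcond] with ω h1 h2
    have h3 : (condExpKernel μ m ω N).toReal = 0 := by
      exact h1.trans h2
    rcases (ENNReal.toReal_eq_zero_iff _).mp h3 with h4 | h4
    · exact h4
    · exact absurd h4 (measure_ne_top _ _)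
  have hS : MeasurableSet[m] {ω | condExpKernel μ m ω N = 0} :=
    measurable_condExpKernel hNmeas (measurableSet_singleton 0)
  have hker_trim : ∀ᵐ ω ∂(μ.trim hm), condExpKernel μ m ω N = 0 := by
    rw [ae_iff]
    have hset : {ω | ¬ condExpKernel μ m ω N = 0}
        = {ω | condExpKernel μ m ω N = 0}ᶜ := rfl
    rw [hset, trim_measurableSet_eq hm hS.compl]
    exact ae_iff.mp hker
  refine Kernel.IndepFun.congr' h ?_ ?_
  · exact Filter.Eventually.of_forall fun ω => Filter.EventuallyEq.rfl
  · filter_upwards [hker_trim] with a ha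
    rw [Filter.EventuallyEq, ae_iff]
    exact measure_mono_null hNsub ha

/-- Key lemma: under conditional independence of `Z` and `W` given `m`, the conditional
expectation of a product of an indicator of a `Z`-preimage with a `σ(W)`-measurable
integrable function factorizes. -/
lemma condexp_indicator_mul_of_condIndepFun
    {Ω γ δ : Type*} {m : MeasurableSpace Ω} [mΩ : MeasurableSpace Ω]
    [StandardBorelSpace Ω] [Nonempty Ω]
    [MeasurableSpace γ] [MeasurableSpace δ]
    {μ : Measure Ω} [IsProbabilityMeasure μ] (hm : m ≤ mΩ)
    {Z : Ω → γ} {W : Ω → δ} (hZ : Measurable Z) (hW : Measurable W)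
    (hind : CondIndepFun m hm Z W μ)
    {s : Set γ} (hs : MeasurableSet s)
    {ψ : Ω → ℝ} (hψm : Measurable[MeasurableSpace.comap W inferInstance] ψ)
    (hψ : Integrable ψ μ) :
    μ[fun ω => (Z ⁻¹' s).indicator (fun _ => (1:ℝ)) ω * ψ ω|m] =ᵐ[μ]
      fun ω => (μ[(Z ⁻¹' s).indicator (fun _ => (1:ℝ))|m]) ω * (μ[ψ|m]) ω := by
  have hmW : MeasurableSpace.comap W inferInstance ≤ mΩ := hW.comap_le
  have hA : MeasurableSet (Z ⁻¹' s) := hZ hs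
  set A : Set Ω := Z ⁻¹' s with hA_def
  set iA : Ω → ℝ := A.indicator (fun _ => (1:ℝ)) with hiA_def
  have ind_mul : ∀ (t : Set Ω) (g : Ω → ℝ) (ω : Ω),
      t.indicator g ω = t.indicator (fun _ => (1:ℝ)) ω * g ω := by
    intro t g ω
    by_cases h : ω ∈ t <;> simp [h]
  have ind_bd : ∀ (t : Set Ω) (ω : Ω), ‖t.indicator (fun _ => (1:ℝ)) ω‖ ≤ 1 := by
    intro t ω; by_cases h : ω ∈ t <;> simp [h]
  have hiA_int : Integrable iA μ := (integrable_const (1:ℝ)).indicator hA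
  have hiA_cbd : ∀ᵐ ω ∂μ, |(μ[iA|m]) ω| ≤ ((1 : NNReal) : ℝ) :=
    ae_bdd_condExp_of_ae_bdd (ae_of_all _ fun ω => by
      simpa [Real.norm_eq_abs] using ind_bd A ω)
  have hiA_cbd' : ∀ᵐ ω ∂μ, ‖(μ[iA|m]) ω‖ ≤ 1 := by
    filter_upwards [hiA_cbd] with ω h
    simpa [Real.norm_eq_abs] using h
  have hψ_sm : StronglyMeasurable[MeasurableSpace.comap W inferInstance] ψ :=
    hψm.stronglyMeasurable
  have hiA_meas : Measurable iA := measurable_const.indicator hA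
  have hf_int : Integrable (fun ω => iA ω * ψ ω) μ :=
    hψ.bdd_mul hiA_meas.aestronglyMeasurable (ae_of_all _ (ind_bd A))
  have hg_int : Integrable (fun ω => (μ[iA|m]) ω * (μ[ψ|m]) ω) μ :=
    integrable_condExp.bdd_mul
      (stronglyMeasurable_condExp.mono hm).aestronglyMeasurable hiA_cbd'
  have key : ∀ u : Set Ω, MeasurableSet[m] u →
      ∫ ω in u, (μ[iA|m]) ω * (μ[ψ|m]) ω ∂μ = ∫ ω in u, iA ω * ψ ω ∂μ := by
    intro u hu
    have huΩ : MeasurableSet u := hm u hu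
    set iU : Ω → ℝ := u.indicator (fun _ => (1:ℝ)) with hiU_def
    have hiU_sm : StronglyMeasurable[m] iU := stronglyMeasurable_const.indicator hu
    set M : Ω → ℝ := fun ω => iU ω * (μ[iA|m]) ω with hM_def
    have hM_sm : StronglyMeasurable[m] M := hiU_sm.mul stronglyMeasurable_condExp
    have hM_bd : ∀ᵐ ω ∂μ, ‖M ω‖ ≤ 1 := by
      filter_upwards [hiA_cbd'] with ω h
      calc ‖M ω‖ = ‖iU ω‖ * ‖(μ[iA|m]) ω‖ := norm_mul _ _
        _ ≤ 1 * 1 := mul_le_mul (ind_bd u ω) h (norm_nonneg _) zero_le_one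
        _ = 1 := one_mul 1
    set h0 : Ω → ℝ := fun ω => iU ω * (iA ω - (μ[iA|m]) ω) with hh0_def
    have hh0_int : Integrable h0 μ :=
      (hiA_int.sub integrable_condExp).bdd_mul
        ((hiU_sm.mono hm).aestronglyMeasurable) (ae_of_all _ (ind_bd u))
    have hh0_bd : ∀ᵐ ω ∂μ, ‖h0 ω‖ ≤ 2 := by
      filter_upwards [hiA_cbd'] with ω h
      have h2 : ‖iA ω - (μ[iA|m]) ω‖ ≤ 2 := by
        calc ‖iA ω - (μ[iA|m]) ω‖ ≤ ‖iA ω‖ + ‖(μ[iA|m]) ω‖ := norm_sub_le _ _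
          _ ≤ 1 + 1 := add_le_add (ind_bd A ω) h
          _ = 2 := by norm_num
      calc ‖h0 ω‖ = ‖iU ω‖ * ‖iA ω - (μ[iA|m]) ω‖ := norm_mul _ _
        _ ≤ 1 * 2 := mul_le_mul (ind_bd u ω) h2 (norm_nonneg _) zero_le_one
        _ = 2 := one_mul 2
    -- orthogonality of `h0` to `σ(W)`
    have hzero_eq : ∀ C : Set Ω, MeasurableSet[MeasurableSpace.comap W inferInstance] C →
        μ C < ⊤ → ∫ ω in C, (0:ℝ) ∂μ = ∫ ω in C, h0 ω ∂μ := by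
      intro C hC _
      obtain ⟨t, ht, rfl⟩ := hC
      have hCt : MeasurableSet (W ⁻¹' t) := hW ht
      set Ct : Set Ω := W ⁻¹' t with hCt_def
      set iC : Ω → ℝ := Ct.indicator (fun _ => (1:ℝ)) with hiC_def
      have hiC_int : Integrable iC μ := (integrable_const (1:ℝ)).indicator hCt
      have hiC_meas : Measurable iC := measurable_const.indicator hCt
      have e1 : ∫ ω in Ct, h0 ω ∂μ = ∫ ω, iC ω * h0 ω ∂μ := by
        rw [← integral_indicator hCt]
        exact integral_congr_ae (ae_of_all _ fun ω => ind_mul Ct h0 ω)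
      have hiAiC_int : Integrable (fun ω => iA ω * iC ω) μ :=
        hiC_int.bdd_mul hiA_meas.aestronglyMeasurable (ae_of_all _ (ind_bd A))
      have p1_int : Integrable (fun ω => iU ω * (iA ω * iC ω)) μ :=
        hiAiC_int.bdd_mul ((hiU_sm.mono hm).aestronglyMeasurable)
          (ae_of_all _ (ind_bd u))
      have p2_int : Integrable (fun ω => M ω * iC ω) μ :=
        hiC_int.bdd_mul ((hM_sm.mono hm).aestronglyMeasurable) hM_bd
      have split : ∫ ω, iC ω * h0 ω ∂μ
          = ∫ ω, iU ω * (iA ω * iC ω) ∂μ - ∫ ω, M ω * iC ω ∂μ := by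
        rw [← integral_sub p1_int p2_int]
        refine integral_congr_ae (ae_of_all _ fun ω => ?_)
        simp only [hh0_def, hM_def]
        ring
      have e3 : ∫ ω, M ω * iC ω ∂μ = ∫ ω, M ω * (μ[iC|m]) ω ∂μ :=
        (integral_mul_condexp_eq hm hM_sm hM_bd hiC_int).symm
      have e4 : (fun ω => iA ω * iC ω) = (A ∩ Ct).indicator (fun _ => (1:ℝ)) := by
        funext ω
        by_cases h1 : ω ∈ A <;> by_cases h2 : ω ∈ Ct <;>
          simp [hiA_def, hiC_def, Set.indicator_apply, h1, h2, Set.mem_inter_iff]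
      have hiAC_int : Integrable ((A ∩ Ct).indicator (fun _ => (1:ℝ))) μ :=
        (integrable_const (1:ℝ)).indicator (hA.inter hCt)
      have e5 : ∫ ω, iU ω * (iA ω * iC ω) ∂μ
          = ∫ ω, iU ω * (μ[(A ∩ Ct).indicator (fun _ => (1:ℝ))|m]) ω ∂μ := by
        rw [show (fun ω => iU ω * (iA ω * iC ω))
            = fun ω => iU ω * ((A ∩ Ct).indicator (fun _ => (1:ℝ)) ω) from
          funext fun ω => by rw [show iA ω * iC ω
            = (A ∩ Ct).indicator (fun _ => (1:ℝ)) ω from congrFun e4 ω]]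
        exact (integral_mul_condexp_eq hm hiU_sm (ae_of_all _ (ind_bd u)) hiAC_int).symm
      have hmul := (condIndepFun_iff_condExp_inter_preimage_eq_mul hZ hW).mp hind s t hs ht
      have e6 : ∫ ω, iU ω * (μ[(A ∩ Ct).indicator (fun _ => (1:ℝ))|m]) ω ∂μ
          = ∫ ω, iU ω * ((μ[iA|m]) ω * (μ[iC|m]) ω) ∂μ := by
        refine integral_congr_ae ?_
        filter_upwards [hmul] with ω hω
        exact congrArg (iU ω * ·) hω
      have e7 : ∫ ω, M ω * (μ[iC|m]) ω ∂μ
          = ∫ ω, iU ω * ((μ[iA|m]) ω * (μ[iC|m]) ω) ∂μ := by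
        refine integral_congr_ae (ae_of_all _ fun ω => ?_)
        simp only [hM_def]
        ring
      rw [integral_zero, e1, split, e3, e5, e6, e7, sub_self]
    have hcond0 : μ[h0|MeasurableSpace.comap W inferInstance] =ᵐ[μ] (0 : Ω → ℝ) := by
      have h := ae_eq_condExp_of_forall_setIntegral_eq hmW (f := h0) (g := fun _ => (0:ℝ))
        hh0_int (fun C _ _ => (integrable_const (0:ℝ)).integrableOn) hzero_eq
        (stronglyMeasurable_const.aestronglyMeasurable)
      exact h.symm
    have hψh_int : Integrable (fun ω => ψ ω * h0 ω) μ := by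
      have h := hψ.bdd_mul hh0_int.aestronglyMeasurable hh0_bd
      exact h.congr (ae_of_all _ fun ω => mul_comm _ _)
    have hint0 : ∫ ω, ψ ω * h0 ω ∂μ = 0 := by
      have hpull := condExp_mul_of_stronglyMeasurable_left hψ_sm hψh_int hh0_int
      have hz : μ[ψ * h0|MeasurableSpace.comap W inferInstance] =ᵐ[μ] (0 : Ω → ℝ) := by
        filter_upwards [hpull, hcond0] with ω h1 h2
        rw [h1]
        simp [h2]
      have hintg : Integrable (ψ * h0) μ := hψh_int
      calc ∫ ω, ψ ω * h0 ω ∂μ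
          = ∫ ω, (ψ * h0) ω ∂μ := rfl
        _ = ∫ ω, (μ[ψ * h0|MeasurableSpace.comap W inferInstance]) ω ∂μ :=
            (integral_condExp hmW).symm
        _ = 0 := by rw [integral_congr_ae hz]; simp
    have eL : ∫ ω in u, (μ[iA|m]) ω * (μ[ψ|m]) ω ∂μ = ∫ ω, M ω * (μ[ψ|m]) ω ∂μ := by
      rw [← integral_indicator huΩ]
      refine integral_congr_ae (ae_of_all _ fun ω => ?_)
      rw [ind_mul u _ ω]
      simp only [hM_def]
      ring
    have eM : ∫ ω, M ω * (μ[ψ|m]) ω ∂μ = ∫ ω, M ω * ψ ω ∂μ :=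
      integral_mul_condexp_eq hm hM_sm hM_bd hψ
    have eR : ∫ ω in u, iA ω * ψ ω ∂μ = ∫ ω, iU ω * (iA ω * ψ ω) ∂μ := by
      rw [← integral_indicator huΩ]
      exact integral_congr_ae (ae_of_all _ fun ω => ind_mul u _ ω)
    have hMψ_int : Integrable (fun ω => M ω * ψ ω) μ :=
      hψ.bdd_mul ((hM_sm.mono hm).aestronglyMeasurable) hM_bd
    have hiUiAψ_int : Integrable (fun ω => iU ω * (iA ω * ψ ω)) μ :=
      hf_int.bdd_mul ((hiU_sm.mono hm).aestronglyMeasurable) (ae_of_all _ (ind_bd u))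
    have hdiff : ∫ ω, iU ω * (iA ω * ψ ω) ∂μ - ∫ ω, M ω * ψ ω ∂μ = 0 := by
      rw [← integral_sub hiUiAψ_int hMψ_int]
      rw [show (fun ω => iU ω * (iA ω * ψ ω) - M ω * ψ ω) = fun ω => ψ ω * h0 ω from
        funext fun ω => by simp only [hM_def, hh0_def]; ring]
      exact hint0
    rw [eL, eM, eR]
    linarith
  have hgm : AEStronglyMeasurable[m] (fun ω => (μ[iA|m]) ω * (μ[ψ|m]) ω) μ :=
    (stronglyMeasurable_condExp.mul stronglyMeasurable_condExp).aestronglyMeasurable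
  exact (ae_eq_condExp_of_forall_setIntegral_eq hm hf_int
    (fun u _ _ => hg_int.integrableOn) (fun u hu _ => key u hu) hgm).symm

end Aux

/-- **Identification of LATE in the two-regime design** (Theorem 1).
Under conditional independence of the assignment indicators `(Z¹, Z⁰)` from the potential
variables `(Y₁, Y₀, D₁, D₀)` given the covariate σ-algebra `m = σ(X)` and monotonicity
`D₀ ≤ D₁` a.s., we have, `P`-a.e.,
`(E[Y¹|m] − E[Y⁰|m]) · E[1{D₁>D₀}|m] = (E[D¹|m] − E[D⁰|m]) · E[(Y₁−Y₀)·1{D₁>D₀}|m]`. -/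
theorem late_identification
    {Ω 𝒳 : Type*} [mΩ : MeasurableSpace Ω] [StandardBorelSpace Ω] [Nonempty Ω]
    [MeasurableSpace 𝒳]
    (P : Measure Ω) [IsProbabilityMeasure P]
    (X : Ω → 𝒳) (hX : Measurable X)
    (D1 D0 Z1 Z0 Y1 Y0 : Ω → ℝ)
    (hD1 : Measurable D1) (hD0 : Measurable D0)
    (hZ1 : Measurable Z1) (hZ0 : Measurable Z0)
    (hD1b : ∀ ω, D1 ω = 0 ∨ D1 ω = 1) (hD0b : ∀ ω, D0 ω = 0 ∨ D0 ω = 1)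
    (hZ1b : ∀ ω, Z1 ω = 0 ∨ Z1 ω = 1) (hZ0b : ∀ ω, Z0 ω = 0 ∨ Z0 ω = 1)
    (hY1 : Integrable Y1 P) (hY0 : Integrable Y0 P)
    (m : MeasurableSpace Ω)
    (hm_def : m = MeasurableSpace.comap X inferInstance)
    (hm : m ≤ mΩ)
    (Dk1 Dk0 Yk1 Yk0 : Ω → ℝ)
    (hDk1 : Dk1 = fun ω => Z1 ω * D1 ω + (1 - Z1 ω) * D0 ω)
    (hDk0 : Dk0 = fun ω => Z0 ω * D1 ω + (1 - Z0 ω) * D0 ω)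
    (hYk1 : Yk1 = fun ω => Dk1 ω * Y1 ω + (1 - Dk1 ω) * Y0 ω)
    (hYk0 : Yk0 = fun ω => Dk0 ω * Y1 ω + (1 - Dk0 ω) * Y0 ω)
    (hindep : CondIndepFun m hm (fun ω => (Z1 ω, Z0 ω))
      (fun ω => (Y1 ω, Y0 ω, D1 ω, D0 ω)) P)
    (hmono : ∀ᵐ ω ∂P, D0 ω ≤ D1 ω) :
    ∀ᵐ ω ∂P,
      ((P[Yk1|m]) ω - (P[Yk0|m]) ω)
          * (P[({ω | D0 ω < D1 ω}.indicator (fun _ => (1:ℝ)))|m]) ω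
        = ((P[Dk1|m]) ω - (P[Dk0|m]) ω)
          * (P[(fun ω => (Y1 ω - Y0 ω) * {ω | D0 ω < D1 ω}.indicator (fun _ => (1:ℝ)) ω)|m]) ω := by
  classical
  -- measurable representatives of Y1 and Y0
  set Y1' : Ω → ℝ := hY1.1.mk Y1 with hY1'_def
  set Y0' : Ω → ℝ := hY0.1.mk Y0 with hY0'_def
  have hY1'm : Measurable[mΩ] Y1' := hY1.1.stronglyMeasurable_mk.measurable
  have hY0'm : Measurable[mΩ] Y0' := hY0.1.stronglyMeasurable_mk.measurable
  have hY1ae : Y1 =ᵐ[P] Y1' := hY1.1.ae_eq_mk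
  have hY0ae : Y0 =ᵐ[P] Y0' := hY0.1.ae_eq_mk
  have hY1'int : Integrable Y1' P := hY1.congr hY1ae
  have hY0'int : Integrable Y0' P := hY0.congr hY0ae
  set Zp : Ω → ℝ × ℝ := fun ω => (Z1 ω, Z0 ω) with hZp_def
  have hZp : Measurable[mΩ] Zp := hZ1.prodMk hZ0
  set W' : Ω → ℝ × ℝ × ℝ × ℝ := fun ω => (Y1' ω, Y0' ω, D1 ω, D0 ω) with hW'_def
  have hW' : Measurable[mΩ] W' := hY1'm.prodMk (hY0'm.prodMk (hD1.prodMk hD0))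
  have hWW' : (fun ω => (Y1 ω, Y0 ω, D1 ω, D0 ω)) =ᵐ[P] W' := by
    filter_upwards [hY1ae, hY0ae] with ω h1 h2
    simp only [hW'_def, h1, h2]
  have hindep' : CondIndepFun m hm Zp W' P :=
    condIndepFun_of_ae_eq_right (mΩ := mΩ) hm hindep hWW'
  -- measurability with respect to σ(W')
  have hW'c : Measurable[MeasurableSpace.comap W' inferInstance] W' :=
    fun t ht => ⟨t, ht, rfl⟩
  have hY1'c : Measurable[MeasurableSpace.comap W' inferInstance] Y1' :=
    measurable_fst.comp hW'c
  have hY0'c : Measurable[MeasurableSpace.comap W' inferInstance] Y0' :=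
    (measurable_fst.comp measurable_snd).comp hW'c
  have hD1c : Measurable[MeasurableSpace.comap W' inferInstance] D1 :=
    (measurable_fst.comp (measurable_snd.comp measurable_snd)).comp hW'c
  have hD0c : Measurable[MeasurableSpace.comap W' inferInstance] D0 :=
    (measurable_snd.comp (measurable_snd.comp measurable_snd)).comp hW'c
  set G' : Ω → ℝ := fun ω => (Y1' ω - Y0' ω) * (D1 ω - D0 ω) with hG'_def
  set H : Ω → ℝ := fun ω => D1 ω - D0 ω with hH_def
  have hG'c : Measurable[MeasurableSpace.comap W' inferInstance] G' :=
    (hY1'c.sub hY0'c).mul (hD1c.sub hD0c)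
  have hHc : Measurable[MeasurableSpace.comap W' inferInstance] H := hD1c.sub hD0c
  -- integrability
  have habs : ∀ (f : Ω → ℝ), (∀ ω, f ω = 0 ∨ f ω = 1) → ∀ ω, |f ω| ≤ 1 := by
    intro f hf ω
    rcases hf ω with h | h <;> simp [h]
  have hHbd : ∀ ω, |H ω| ≤ 2 := by
    intro ω
    have h1 := abs_le.mp (habs D1 hD1b ω)
    have h0 := abs_le.mp (habs D0 hD0b ω)
    simp only [hH_def]
    rw [abs_le]
    constructor <;> linarith [h1.1, h1.2, h0.1, h0.2]
  have hHint : Integrable H P := integrable_of_bdd (mΩ := mΩ) (hD1.sub hD0) hHbd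
  have hG'int : Integrable G' P := by
    have h := (hY1'int.sub hY0'int).bdd_mul (hD1.sub hD0).aestronglyMeasurable
      (ae_of_all _ fun ω => by simpa [Real.norm_eq_abs] using hHbd ω)
    exact h.congr (ae_of_all _ fun ω => mul_comm _ _)
  have hZ1bd : ∀ᵐ ω ∂P, ‖Z1 ω‖ ≤ 1 := ae_of_all _ fun ω => by
    simpa [Real.norm_eq_abs] using habs Z1 hZ1b ω
  have hZ0bd : ∀ᵐ ω ∂P, ‖Z0 ω‖ ≤ 1 := ae_of_all _ fun ω => by
    simpa [Real.norm_eq_abs] using habs Z0 hZ0b ω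
  have hZ1G'int : Integrable (fun ω => Z1 ω * G' ω) P :=
    hG'int.bdd_mul hZ1.aestronglyMeasurable hZ1bd
  have hZ0G'int : Integrable (fun ω => Z0 ω * G' ω) P :=
    hG'int.bdd_mul hZ0.aestronglyMeasurable hZ0bd
  have hZ1Hint : Integrable (fun ω => Z1 ω * H ω) P :=
    hHint.bdd_mul hZ1.aestronglyMeasurable hZ1bd
  have hZ0Hint : Integrable (fun ω => Z0 ω * H ω) P :=
    hHint.bdd_mul hZ0.aestronglyMeasurable hZ0bd
  have hDk1m : Measurable[mΩ] Dk1 := by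
    rw [hDk1]; exact (hZ1.mul hD1).add ((measurable_const.sub hZ1).mul hD0)
  have hDk0m : Measurable[mΩ] Dk0 := by
    rw [hDk0]; exact (hZ0.mul hD1).add ((measurable_const.sub hZ0).mul hD0)
  have hDk1bd : ∀ ω, |Dk1 ω| ≤ 3 := by
    intro ω
    simp only [hDk1]
    rcases hZ1b ω with hz | hz <;> rcases hD1b ω with hd | hd <;>
      rcases hD0b ω with hd0 | hd0 <;> rw [hz, hd, hd0] <;> norm_num
  have hDk0bd : ∀ ω, |Dk0 ω| ≤ 3 := by
    intro ω
    simp only [hDk0]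
    rcases hZ0b ω with hz | hz <;> rcases hD1b ω with hd | hd <;>
      rcases hD0b ω with hd0 | hd0 <;> rw [hz, hd, hd0] <;> norm_num
  have hDk1int : Integrable Dk1 P := integrable_of_bdd (mΩ := mΩ) hDk1m hDk1bd
  have hDk0int : Integrable Dk0 P := integrable_of_bdd (mΩ := mΩ) hDk0m hDk0bd
  have hYk1int : Integrable Yk1 P := by
    rw [hYk1]
    refine Integrable.add ?_ ?_
    · exact hY1.bdd_mul hDk1m.aestronglyMeasurable (ae_of_all _ fun ω => by
        simpa [Real.norm_eq_abs] using hDk1bd ω)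
    · refine hY0.bdd_mul (c := 4) (measurable_const.sub hDk1m).aestronglyMeasurable
        (ae_of_all _ fun ω => ?_)
      have h := abs_le.mp (hDk1bd ω)
      rw [Real.norm_eq_abs, abs_le]
      constructor <;> linarith [h.1, h.2]
  have hYk0int : Integrable Yk0 P := by
    rw [hYk0]
    refine Integrable.add ?_ ?_
    · exact hY1.bdd_mul hDk0m.aestronglyMeasurable (ae_of_all _ fun ω => by
        simpa [Real.norm_eq_abs] using hDk0bd ω)
    · refine hY0.bdd_mul (c := 4) (measurable_const.sub hDk0m).aestronglyMeasurable
        (ae_of_all _ fun ω => ?_)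
      have h := abs_le.mp (hDk0bd ω)
      rw [Real.norm_eq_abs, abs_le]
      constructor <;> linarith [h.1, h.2]
  -- indicator sets for Z1 = 1 and Z0 = 1
  have hs1 : MeasurableSet (Prod.fst ⁻¹' ({1} : Set ℝ) : Set (ℝ × ℝ)) :=
    measurable_fst (measurableSet_singleton 1)
  have hs0 : MeasurableSet (Prod.snd ⁻¹' ({1} : Set ℝ) : Set (ℝ × ℝ)) :=
    measurable_snd (measurableSet_singleton 1)
  have eqZ1 : (Zp ⁻¹' (Prod.fst ⁻¹' ({1} : Set ℝ))).indicator (fun _ => (1:ℝ)) = Z1 := by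
    funext ω
    rcases hZ1b ω with h | h <;>
      simp [Set.indicator_apply, Set.mem_preimage, hZp_def, h]
  have eqZ0 : (Zp ⁻¹' (Prod.snd ⁻¹' ({1} : Set ℝ))).indicator (fun _ => (1:ℝ)) = Z0 := by
    funext ω
    rcases hZ0b ω with h | h <;>
      simp [Set.indicator_apply, Set.mem_preimage, hZp_def, h]
  -- the four factorizations
  have key1G : P[fun ω => Z1 ω * G' ω|m] =ᵐ[P] fun ω => (P[Z1|m]) ω * (P[G'|m]) ω := by
    have h := condexp_indicator_mul_of_condIndepFun (mΩ := mΩ) hm hZp hW' hindep' hs1 hG'c hG'int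
    rw [eqZ1] at h
    exact h
  have key0G : P[fun ω => Z0 ω * G' ω|m] =ᵐ[P] fun ω => (P[Z0|m]) ω * (P[G'|m]) ω := by
    have h := condexp_indicator_mul_of_condIndepFun (mΩ := mΩ) hm hZp hW' hindep' hs0 hG'c hG'int
    rw [eqZ0] at h
    exact h
  have key1H : P[fun ω => Z1 ω * H ω|m] =ᵐ[P] fun ω => (P[Z1|m]) ω * (P[H|m]) ω := by
    have h := condexp_indicator_mul_of_condIndepFun (mΩ := mΩ) hm hZp hW' hindep' hs1 hHc hHint
    rw [eqZ1] at h
    exact h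
  have key0H : P[fun ω => Z0 ω * H ω|m] =ᵐ[P] fun ω => (P[Z0|m]) ω * (P[H|m]) ω := by
    have h := condexp_indicator_mul_of_condIndepFun (mΩ := mΩ) hm hZp hW' hindep' hs0 hHc hHint
    rw [eqZ0] at h
    exact h
  -- algebraic identities
  have hDdiff : Dk1 - Dk0 = (fun ω => Z1 ω * H ω) - (fun ω => Z0 ω * H ω) := by
    funext ω
    simp only [Pi.sub_apply, hDk1, hDk0, hH_def]
    ring
  have hYdiff : Yk1 - Yk0 =ᵐ[P] (fun ω => Z1 ω * G' ω) - (fun ω => Z0 ω * G' ω) := by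
    filter_upwards [hY1ae, hY0ae] with ω h1 h2
    simp only [Pi.sub_apply, hYk1, hYk0, hDk1, hDk0, hG'_def, ← h1, ← h2]
    ring
  -- the indicator is a.e. equal to H
  have hindH : {ω | D0 ω < D1 ω}.indicator (fun _ => (1:ℝ)) =ᵐ[P] H := by
    filter_upwards [hmono] with ω hω
    rcases hD1b ω with h1 | h1 <;> rcases hD0b ω with h0 | h0
    · simp [Set.indicator_apply, Set.mem_setOf_eq, hH_def, h1, h0]
    · exfalso; rw [h1, h0] at hω; norm_num at hω
    · simp [Set.indicator_apply, Set.mem_setOf_eq, hH_def, h1, h0]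
    · simp [Set.indicator_apply, Set.mem_setOf_eq, hH_def, h1, h0]
  have hindG : (fun ω => (Y1 ω - Y0 ω) * {ω | D0 ω < D1 ω}.indicator (fun _ => (1:ℝ)) ω)
      =ᵐ[P] G' := by
    filter_upwards [hindH, hY1ae, hY0ae] with ω h h1 h2
    rw [h]
    simp only [hG'_def, hH_def, h1, h2]
  -- conditional expectation identities
  have T1 : ∀ᵐ ω ∂P, (P[Yk1|m]) ω - (P[Yk0|m]) ω
      = (P[Z1|m]) ω * (P[G'|m]) ω - (P[Z0|m]) ω * (P[G'|m]) ω := by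
    filter_upwards [condExp_sub hYk1int hYk0int m, condExp_congr_ae hYdiff,
      condExp_sub hZ1G'int hZ0G'int m, key1G, key0G] with ω e1 e2 e3 e4 e5
    simp only [Pi.sub_apply] at e1 e3
    rw [← e1, e2, e3, e4, e5]
  have T2 : ∀ᵐ ω ∂P, (P[Dk1|m]) ω - (P[Dk0|m]) ω
      = (P[Z1|m]) ω * (P[H|m]) ω - (P[Z0|m]) ω * (P[H|m]) ω := by
    have c2 : P[Dk1 - Dk0|m] = P[(fun ω => Z1 ω * H ω) - (fun ω => Z0 ω * H ω)|m] := by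
      rw [hDdiff]
    filter_upwards [condExp_sub hDk1int hDk0int m,
      condExp_sub hZ1Hint hZ0Hint m, key1H, key0H] with ω e1 e3 e4 e5
    simp only [Pi.sub_apply] at e1 e3
    rw [← e1, congrFun c2 ω, e3, e4, e5]
  have T3 : P[{ω | D0 ω < D1 ω}.indicator (fun _ => (1:ℝ))|m] =ᵐ[P] P[H|m] :=
    condExp_congr_ae hindH
  have T4 : P[(fun ω => (Y1 ω - Y0 ω) * {ω | D0 ω < D1 ω}.indicator (fun _ => (1:ℝ)) ω)|m]
      =ᵐ[P] P[G'|m] := condExp_congr_ae hindG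
  filter_upwards [T1, T2, T3, T4] with ω e1 e2 e3 e4
  rw [e1, e2, e3, e4]
  ring
end

section
/- Let (Ω, F, P) be a probability space, m = σ(X) the σ-algebra generated by a measurable map X, and D₁, D₀, Z¹, Z⁰ : Ω → {0,1} measurable. Define D^k := Z^k·D₁ + (1−Z^k)·D₀ for k = 0,1. If the pair (Z¹, Z⁰) is conditionally independent of the pair (D₁, D₀) given m, then P-almost everywhere E[D¹ | m] − E[D⁰ | m] = E[Z¹ − Z⁰ | m] · E[D₁ − D₀ | m]. -/
open MeasureTheory ProbabilityTheory


private lemma tdf_integrable_indicator_one {Ω : Type*} [mα : MeasurableSpace Ω]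
    (P : Measure Ω) [IsFiniteMeasure P] {A : Set Ω} (hA : MeasurableSet A) :
    Integrable (A.indicator (fun _ => (1:ℝ))) P :=
  (integrable_const (1:ℝ)).indicator hA

private lemma tdf_integrable_of_bounded {Ω : Type*} [mα : MeasurableSpace Ω]
    (P : Measure Ω) [IsFiniteMeasure P] {f : Ω → ℝ} (hf : Measurable f)
    (hb : ∀ ω, |f ω| ≤ 1) : Integrable f P :=
  (integrable_const (1:ℝ)).mono' hf.aestronglyMeasurable
    (Filter.Eventually.of_forall fun ω => by simpa using hb ω)

/-- In the two-regime design, if `(Z¹, Z⁰)` is conditionally independent of `(D₁, D₀)`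
given `m = σ(X)`, then `P`-a.e.
`E[D¹|m] − E[D⁰|m] = E[Z¹ − Z⁰|m] · E[D₁ − D₀|m]`. -/
theorem treatment_difference_factorization
    {Ω 𝒳 : Type*} [mΩ : MeasurableSpace Ω] [StandardBorelSpace Ω] [Nonempty Ω]
    [MeasurableSpace 𝒳]
    (P : Measure Ω) [IsProbabilityMeasure P]
    (X : Ω → 𝒳) (hX : Measurable X)
    (D1 D0 Z1 Z0 : Ω → ℝ)
    (hD1 : Measurable D1) (hD0 : Measurable D0)
    (hZ1 : Measurable Z1) (hZ0 : Measurable Z0)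
    (hD1b : ∀ ω, D1 ω = 0 ∨ D1 ω = 1) (hD0b : ∀ ω, D0 ω = 0 ∨ D0 ω = 1)
    (hZ1b : ∀ ω, Z1 ω = 0 ∨ Z1 ω = 1) (hZ0b : ∀ ω, Z0 ω = 0 ∨ Z0 ω = 1)
    (m : MeasurableSpace Ω)
    (hm_def : m = MeasurableSpace.comap X inferInstance)
    (hm : m ≤ mΩ)
    (Dk1 Dk0 : Ω → ℝ)
    (hDk1 : Dk1 = fun ω => Z1 ω * D1 ω + (1 - Z1 ω) * D0 ω)
    (hDk0 : Dk0 = fun ω => Z0 ω * D1 ω + (1 - Z0 ω) * D0 ω)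
    (hindep : CondIndepFun m hm (fun ω => (Z1 ω, Z0 ω)) (fun ω => (D1 ω, D0 ω)) P) :
    ∀ᵐ ω ∂P,
      (P[Dk1|m]) ω - (P[Dk0|m]) ω
        = (P[(fun ω => Z1 ω - Z0 ω)|m]) ω * (P[(fun ω => D1 ω - D0 ω)|m]) ω := by
  -- bounded functions are integrable
  have hbdd : ∀ (f : Ω → ℝ), Measurable[mΩ] f → (∀ ω, |f ω| ≤ 1) → Integrable f P :=
    fun f hf hb => tdf_integrable_of_bounded (mα := mΩ) P hf hb
  -- the pair maps
  set ZP : Ω → ℝ × ℝ := fun ω => (Z1 ω, Z0 ω) with hZP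
  set DP : Ω → ℝ × ℝ := fun ω => (D1 ω, D0 ω) with hDP
  have hZPm : Measurable[mΩ] ZP := hZ1.prodMk hZ0
  have hDPm : Measurable[mΩ] DP := hD1.prodMk hD0
  -- the four indicator sets
  set A : Set Ω := ZP ⁻¹' {((1:ℝ), (0:ℝ))} with hA_def
  set B : Set Ω := ZP ⁻¹' {((0:ℝ), (1:ℝ))} with hB_def
  set C : Set Ω := DP ⁻¹' {((1:ℝ), (0:ℝ))} with hC_def
  set E : Set Ω := DP ⁻¹' {((0:ℝ), (1:ℝ))} with hE_def
  have hAm : MeasurableSet[mΩ] A := hZPm (measurableSet_singleton _)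
  have hBm : MeasurableSet[mΩ] B := hZPm (measurableSet_singleton _)
  have hCm : MeasurableSet[mΩ] C := hDPm (measurableSet_singleton _)
  have hEm : MeasurableSet[mΩ] E := hDPm (measurableSet_singleton _)
  set IA : Ω → ℝ := A.indicator (fun _ => 1) with hIA_def
  set IB : Ω → ℝ := B.indicator (fun _ => 1) with hIB_def
  set IC : Ω → ℝ := C.indicator (fun _ => 1) with hIC_def
  set IE : Ω → ℝ := E.indicator (fun _ => 1) with hIE_def
  have hIAint : Integrable IA P := tdf_integrable_indicator_one (mα := mΩ) P hAm
  have hIBint : Integrable IB P := tdf_integrable_indicator_one (mα := mΩ) P hBm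
  have hICint : Integrable IC P := tdf_integrable_indicator_one (mα := mΩ) P hCm
  have hIEint : Integrable IE P := tdf_integrable_indicator_one (mα := mΩ) P hEm
  -- pointwise identities
  have hZpt : ∀ ω, Z1 ω - Z0 ω = IA ω - IB ω := by
    intro ω
    rcases hZ1b ω with h1 | h1 <;> rcases hZ0b ω with h0 | h0 <;>
      simp [hIA_def, hIB_def, hA_def, hB_def, hZP, Set.indicator_apply, Set.mem_preimage,
        Prod.ext_iff, h1, h0]
  have hDpt : ∀ ω, D1 ω - D0 ω = IC ω - IE ω := by
    intro ω
    rcases hD1b ω with h1 | h1 <;> rcases hD0b ω with h0 | h0 <;>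
      simp [hIC_def, hIE_def, hC_def, hE_def, hDP, Set.indicator_apply, Set.mem_preimage,
        Prod.ext_iff, h1, h0]
  have hindpt : ∀ (s t : Set Ω) ω,
      (s ∩ t).indicator (fun _ => (1:ℝ)) ω
        = s.indicator (fun _ => (1:ℝ)) ω * t.indicator (fun _ => (1:ℝ)) ω := by
    intro s t ω
    by_cases hs : ω ∈ s <;> by_cases ht : ω ∈ t <;>
      simp [Set.indicator_apply, hs, ht]
  -- Dk1 - Dk0 = (Z1 - Z0) * (D1 - D0) pointwise, rewritten in indicators
  have hDiffpt : ∀ ω, Dk1 ω - Dk0 ω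
      = (A ∩ C).indicator (fun _ => (1:ℝ)) ω - (A ∩ E).indicator (fun _ => (1:ℝ)) ω
        - (B ∩ C).indicator (fun _ => (1:ℝ)) ω + (B ∩ E).indicator (fun _ => (1:ℝ)) ω := by
    intro ω
    have h1 : Dk1 ω - Dk0 ω = (Z1 ω - Z0 ω) * (D1 ω - D0 ω) := by
      rw [hDk1, hDk0]; ring
    rw [h1, hZpt ω, hDpt ω, hindpt A C ω, hindpt A E ω, hindpt B C ω, hindpt B E ω]
    ring
  -- conditional independence at the level of indicators
  have hIndep := (condIndepFun_iff_condExp_inter_preimage_eq_mul (μ := P) (hm' := hm)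
    hZPm hDPm).mp hindep
  have hAC := hIndep {((1:ℝ),(0:ℝ))} {((1:ℝ),(0:ℝ))} (measurableSet_singleton _)
    (measurableSet_singleton _)
  have hAE := hIndep {((1:ℝ),(0:ℝ))} {((0:ℝ),(1:ℝ))} (measurableSet_singleton _)
    (measurableSet_singleton _)
  have hBC := hIndep {((0:ℝ),(1:ℝ))} {((1:ℝ),(0:ℝ))} (measurableSet_singleton _)
    (measurableSet_singleton _)
  have hBE := hIndep {((0:ℝ),(1:ℝ))} {((0:ℝ),(1:ℝ))} (measurableSet_singleton _)
    (measurableSet_singleton _)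
  -- integrability of Dk1, Dk0
  have hDk1int : Integrable Dk1 P := by
    refine hbdd _ ?_ ?_
    · rw [hDk1]; exact (hZ1.mul hD1).add ((measurable_const.sub hZ1).mul hD0)
    · intro ω; rw [hDk1]
      rcases hZ1b ω with h | h <;> rcases hD1b ω with h1 | h1 <;> rcases hD0b ω with h0 | h0 <;>
        simp [h, h1, h0]
  have hDk0int : Integrable Dk0 P := by
    refine hbdd _ ?_ ?_
    · rw [hDk0]; exact (hZ0.mul hD1).add ((measurable_const.sub hZ0).mul hD0)
    · intro ω; rw [hDk0]
      rcases hZ0b ω with h | h <;> rcases hD1b ω with h1 | h1 <;> rcases hD0b ω with h0 | h0 <;>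
        simp [h, h1, h0]
  -- conditional expectation computations
  have h1 : P[fun ω => Dk1 ω - Dk0 ω|m] =ᵐ[P] fun ω => (P[Dk1|m]) ω - (P[Dk0|m]) ω := by
    have := condExp_sub (m := m) (μ := P) hDk1int hDk0int
    filter_upwards [this] with ω hω using hω
  have h2 : P[fun ω => Dk1 ω - Dk0 ω|m]
      =ᵐ[P] fun ω => (P⟦A ∩ C|m⟧) ω - (P⟦A ∩ E|m⟧) ω - (P⟦B ∩ C|m⟧) ω + (P⟦B ∩ E|m⟧) ω := by
    have heq : (fun ω => Dk1 ω - Dk0 ω)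
        = fun ω => (A ∩ C).indicator (fun _ => (1:ℝ)) ω - (A ∩ E).indicator (fun _ => (1:ℝ)) ω
          - (B ∩ C).indicator (fun _ => (1:ℝ)) ω + (B ∩ E).indicator (fun _ => (1:ℝ)) ω :=
      funext hDiffpt
    rw [heq]
    have iAC : Integrable ((A ∩ C).indicator (fun _ => (1:ℝ))) P :=
      tdf_integrable_indicator_one (mα := mΩ) P (hAm.inter hCm)
    have iAE : Integrable ((A ∩ E).indicator (fun _ => (1:ℝ))) P :=
      tdf_integrable_indicator_one (mα := mΩ) P (hAm.inter hEm)
    have iBC : Integrable ((B ∩ C).indicator (fun _ => (1:ℝ))) P :=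
      tdf_integrable_indicator_one (mα := mΩ) P (hBm.inter hCm)
    have iBE : Integrable ((B ∩ E).indicator (fun _ => (1:ℝ))) P :=
      tdf_integrable_indicator_one (mα := mΩ) P (hBm.inter hEm)
    have e1 := condExp_sub (m := m) (μ := P) iAC iAE
    have e2 := condExp_sub (m := m) (μ := P) (iAC.sub iAE) iBC
    have e3 := condExp_add (m := m) (μ := P) ((iAC.sub iAE).sub iBC) iBE
    filter_upwards [e1, e2, e3] with ω he1 he2 he3
    have : (fun ω => (A ∩ C).indicator (fun _ => (1:ℝ)) ω - (A ∩ E).indicator (fun _ => (1:ℝ)) ω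
          - (B ∩ C).indicator (fun _ => (1:ℝ)) ω + (B ∩ E).indicator (fun _ => (1:ℝ)) ω)
        = ((A ∩ C).indicator (fun _ => (1:ℝ)) - (A ∩ E).indicator (fun _ => (1:ℝ))
          - (B ∩ C).indicator (fun _ => (1:ℝ)) + (B ∩ E).indicator (fun _ => (1:ℝ))) := rfl
    rw [this]
    simp only [Pi.add_apply, Pi.sub_apply] at he1 he2 he3 ⊢
    rw [he3, he2, he1]
  have hZc : P[(fun ω => Z1 ω - Z0 ω)|m] =ᵐ[P] fun ω => (P⟦A|m⟧) ω - (P⟦B|m⟧) ω := by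
    have heq : (fun ω => Z1 ω - Z0 ω) = (IA - IB) := funext fun ω => by
      simpa using hZpt ω
    rw [heq]
    have := condExp_sub (m := m) (μ := P) hIAint hIBint
    filter_upwards [this] with ω hω
    simpa [hIA_def, hIB_def] using hω
  have hDc : P[(fun ω => D1 ω - D0 ω)|m] =ᵐ[P] fun ω => (P⟦C|m⟧) ω - (P⟦E|m⟧) ω := by
    have heq : (fun ω => D1 ω - D0 ω) = (IC - IE) := funext fun ω => by
      simpa using hDpt ω
    rw [heq]
    have := condExp_sub (m := m) (μ := P) hICint hIEint
    filter_upwards [this] with ω hω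
    simpa [hIC_def, hIE_def] using hω
  -- assemble
  filter_upwards [h1, h2, hZc, hDc, hAC, hAE, hBC, hBE] with ω e1 e2 eZ eD fAC fAE fBC fBE
  rw [← e1, e2, eZ, eD, fAC, fAE, fBC, fBE]
  ring
end

section
/- Let (Ω, F, P) be a probability space, m = σ(X) the σ-algebra generated by a measurable map X, D₁, D₀, Z¹, Z⁰ : Ω → {0,1} measurable, and Y₁, Y₀ ∈ L¹(P). Define D^k := Z^k·D₁ + (1−Z^k)·D₀ and Y^k := D^k·Y₁ + (1−D^k)·Y₀ for k = 0,1. Assume the pair (Z¹, Z⁰) is conditionally independent of the quadruple (Y₁, Y₀, D₁, D₀) given m and D₁ ≥ D₀ almost surely. Then P-almost everywhere E[Y¹ | m] − E[Y⁰ | m] = E[Z¹ − Z⁰ | m] · E[(Y₁ − Y₀)·1{D₁ > D₀} | m]. -/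
open MeasureTheory ProbabilityTheory Set

set_option linter.unusedSectionVars false

section AuxLemmas
variable {Ω β γ : Type*} {m : MeasurableSpace Ω}
  [mΩ : MeasurableSpace Ω] [StandardBorelSpace Ω] [Nonempty Ω]
  [mβ : MeasurableSpace β] [mγ : MeasurableSpace γ]
  {μ : Measure Ω} [IsProbabilityMeasure μ]
  {A : Ω → β} {B : Ω → γ}

/-- Under conditional independence given `m`, the conditional expectation of an indicator of
`A ⁻¹' s` given `m ⊔ σ(B)` equals that given `m`. -/
lemma condexp_indicator_sup_comap_of_condIndepFun
    (hA : Measurable A) (hB : Measurable B)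
    {hm : m ≤ mΩ}
    (h : CondIndepFun m hm A B μ) {s : Set β} (hs : MeasurableSet s) :
    μ[(A ⁻¹' s).indicator (fun _ => (1:ℝ)) | m ⊔ MeasurableSpace.comap B mγ]
      =ᵐ[μ] μ[(A ⁻¹' s).indicator (fun _ => (1:ℝ)) | m] := by
  set f : Ω → ℝ := (A ⁻¹' s).indicator (fun _ => (1:ℝ)) with hf_def
  set g : Ω → ℝ := μ[f | m] with hg_def
  have hmB : MeasurableSpace.comap B mγ ≤ mΩ := hB.comap_le
  have hm2 : m ⊔ MeasurableSpace.comap B mγ ≤ mΩ := sup_le hm hmB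
  have hAs : MeasurableSet[mΩ] (A ⁻¹' s) := hA hs
  have hf_int : Integrable f μ := (integrable_const (μ := μ) (1:ℝ)).indicator hAs
  have hg_int : Integrable g μ := integrable_condExp
  have hg_bdd : ∀ᵐ x ∂μ, ‖g x‖ ≤ 1 := by
    have h0 : 0 ≤ᵐ[μ] g := condExp_nonneg (Filter.Eventually.of_forall fun x => by
      by_cases hx : x ∈ A ⁻¹' s <;> simp [hf_def, hx])
    have h1 : g ≤ᵐ[μ] μ[(fun _ => (1:ℝ)) | m] := condExp_mono hf_int
      (integrable_const (μ := μ) 1)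
      (Filter.Eventually.of_forall fun x => by by_cases hx : x ∈ A ⁻¹' s <;> simp [hf_def, hx])
    rw [condExp_const hm (1:ℝ)] at h1
    filter_upwards [h0, h1] with x hx0 hx1
    rw [Real.norm_eq_abs, abs_of_nonneg hx0]
    exact hx1
  -- the π-system generating m ⊔ comap B
  set C : Set (Set Ω) := {v | ∃ u t, MeasurableSet[m] u ∧ MeasurableSet t ∧ v = u ∩ B ⁻¹' t}
    with hC_def
  have hC_pi : IsPiSystem C := by
    rintro v₁ ⟨u₁, t₁, hu₁, ht₁, rfl⟩ v₂ ⟨u₂, t₂, hu₂, ht₂, rfl⟩ -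
    exact ⟨u₁ ∩ u₂, t₁ ∩ t₂, hu₁.inter hu₂, ht₁.inter ht₂, by
      ext x; simp; tauto⟩
  have hC_gen : (m ⊔ MeasurableSpace.comap B mγ) = MeasurableSpace.generateFrom C := by
    refine le_antisymm (sup_le ?_ ?_) (MeasurableSpace.generateFrom_le ?_)
    · intro u hu
      exact MeasurableSpace.measurableSet_generateFrom ⟨u, Set.univ, hu, MeasurableSet.univ, by
        simp⟩
    · rintro v ⟨t, ht, rfl⟩
      exact MeasurableSpace.measurableSet_generateFrom ⟨Set.univ, t, MeasurableSet.univ, ht, by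
        simp⟩
    · rintro v ⟨u, t, hu, ht, rfl⟩
      have h1 : MeasurableSet[m ⊔ MeasurableSpace.comap B mγ] u :=
        (MeasurableSpace.le_def.mp le_sup_left) u hu
      have h2 : MeasurableSet[m ⊔ MeasurableSpace.comap B mγ] (B ⁻¹' t) :=
        (MeasurableSpace.le_def.mp le_sup_right) _ ⟨t, ht, rfl⟩
      exact h1.inter h2
  -- set integral equality on all m2-measurable sets
  have key : ∀ v : Set Ω, MeasurableSet[m ⊔ MeasurableSpace.comap B mγ] v →
      ∫ x in v, g x ∂μ = ∫ x in v, f x ∂μ := by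
    have hind := @MeasurableSpace.induction_on_inter Ω (m ⊔ MeasurableSpace.comap B mγ)
      (fun v _ => ∫ x in v, g x ∂μ = ∫ x in v, f x ∂μ) C
      hC_gen hC_pi
    refine fun v hv => hind ?_ ?_ ?_ ?_ v hv
    · simp
    · -- basic case
      rintro v ⟨u, t, hu, ht, rfl⟩
      set e : Ω → ℝ := (B ⁻¹' t).indicator (fun _ => (1:ℝ)) with he_def
      have hBt : MeasurableSet[mΩ] (B ⁻¹' t) := hB ht
      have he_int : Integrable e μ := (integrable_const (μ := μ) (1:ℝ)).indicator hBt
      have he_meas : AEStronglyMeasurable e μ :=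
        ((measurable_const.indicator hBt).stronglyMeasurable).aestronglyMeasurable
      -- rewrite both sides as integrals over u of products with e
      have hprod : ∀ (h : Ω → ℝ), ∫ x in u ∩ B ⁻¹' t, h x ∂μ = ∫ x in u, h x * e x ∂μ := by
        intro h
        rw [← setIntegral_indicator hBt]
        congr 1
        ext x
        by_cases hx : x ∈ B ⁻¹' t <;> simp [he_def, hx]
      rw [hprod g, hprod f]
      -- integrability of products
      have hfe_eq : (fun x => f x * e x) = ((A ⁻¹' s) ∩ (B ⁻¹' t)).indicator (fun _ => (1:ℝ)) := by
        ext x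
        by_cases hx1 : x ∈ A ⁻¹' s <;> by_cases hx2 : x ∈ B ⁻¹' t <;>
          simp [hf_def, he_def, hx1, hx2, Set.indicator_apply]
      have hfe_int : Integrable (fun x => f x * e x) μ := by
        rw [hfe_eq]; exact (integrable_const (μ := μ) (1:ℝ)).indicator (hAs.inter hBt)
      have hge_int : Integrable (fun x => g x * e x) μ :=
        he_int.bdd_mul ((stronglyMeasurable_condExp.mono hm).aestronglyMeasurable) hg_bdd
      -- main computation over u
      have step1 : ∫ x in u, g x * e x ∂μ = ∫ x in u, (μ[fun x => g x * e x | m]) x ∂μ :=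
        (setIntegral_condExp hm hge_int hu).symm
      have pull : μ[fun x => g x * e x | m] =ᵐ[μ] fun x => g x * (μ[e | m]) x := by
        have := condExp_mul_of_stronglyMeasurable_left (μ := μ) (m := m)
          stronglyMeasurable_condExp (g := e) hge_int he_int
        exact this
      have indep_fact : μ[fun x => f x * e x | m] =ᵐ[μ] fun x => g x * (μ[e | m]) x := by
        have hfact := (condIndepFun_iff_condExp_inter_preimage_eq_mul
          (hm' := hm) (μ := μ) hA hB).mp h s t hs ht
        calc μ[fun x => f x * e x | m] = μ[(A ⁻¹' s ∩ B ⁻¹' t).indicator (fun _ => (1:ℝ)) | m] := by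
              rw [hfe_eq]
        _ =ᵐ[μ] fun x => g x * (μ[e | m]) x := hfact
      have step2 : ∫ x in u, (μ[fun x => g x * e x | m]) x ∂μ
          = ∫ x in u, (μ[fun x => f x * e x | m]) x ∂μ := by
        refine setIntegral_congr_ae (hm _ hu) ?_
        filter_upwards [pull, indep_fact] with x h1 h2 _
        rw [h1, h2]
      have step3 : ∫ x in u, (μ[fun x => f x * e x | m]) x ∂μ = ∫ x in u, f x * e x ∂μ :=
        setIntegral_condExp hm hfe_int hu
      rw [step1, step2, step3]
    · -- compl
      intro v hv hP
      have hv' : MeasurableSet[mΩ] v := hm2 _ hv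
      have h1 := integral_add_compl hv' hg_int
      have h2 := integral_add_compl hv' hf_int
      have htot : ∫ x, g x ∂μ = ∫ x, f x ∂μ := integral_condExp hm
      linarith
    · -- iUnion
      intro vs hdisj hmeas hP
      have hmeas' : ∀ i, MeasurableSet[mΩ] (vs i) := fun i => hm2 _ (hmeas i)
      rw [integral_iUnion hmeas' hdisj hg_int.integrableOn,
        integral_iUnion hmeas' hdisj hf_int.integrableOn]
      exact tsum_congr hP
  refine (ae_eq_condExp_of_forall_setIntegral_eq hm2 hf_int
    (fun v _ _ => hg_int.integrableOn) (fun v hv _ => key v hv) ?_).symm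
  exact ((stronglyMeasurable_condExp.mono le_sup_left :
    StronglyMeasurable[m ⊔ MeasurableSpace.comap B mγ] g)).aestronglyMeasurable

/-- A conditional-expectation bound for indicators. -/
lemma condexp_indicator_bdd_one (hm : m ≤ mΩ) {s : Set Ω} (hs : MeasurableSet[mΩ] s) :
    ∀ᵐ x ∂μ, ‖(μ[s.indicator (fun _ => (1:ℝ)) | m]) x‖ ≤ 1 := by
  have hf_int : Integrable (s.indicator (fun _ => (1:ℝ))) μ :=
    (integrable_const (μ := μ) (1:ℝ)).indicator hs
  have h0 : 0 ≤ᵐ[μ] μ[s.indicator (fun _ => (1:ℝ)) | m] :=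
    condExp_nonneg (Filter.Eventually.of_forall fun x => by
      by_cases hx : x ∈ s <;> simp [hx])
  have h1 : μ[s.indicator (fun _ => (1:ℝ)) | m] ≤ᵐ[μ] μ[(fun _ => (1:ℝ)) | m] :=
    condExp_mono hf_int (integrable_const (μ := μ) 1)
      (Filter.Eventually.of_forall fun x => by by_cases hx : x ∈ s <;> simp [hx])
  rw [condExp_const hm (1:ℝ)] at h1
  filter_upwards [h0, h1] with x hx0 hx1
  rw [Real.norm_eq_abs, abs_of_nonneg hx0]
  exact hx1

/-- Pull-out/product rule: under conditional independence of `A` and `B` given `m`, for a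
set `s` and an integrable `σ(B)`-measurable `G`,
`μ[1_{A⁻¹s}·G | m] = μ[1_{A⁻¹s}|m] · μ[G|m]` a.e. -/
lemma condexp_indicator_mul_of_condIndepFun_s2
    (hA : Measurable A) (hB : Measurable B)
    {hm : m ≤ mΩ}
    (h : CondIndepFun m hm A B μ) {s : Set β} (hs : MeasurableSet s)
    {G : Ω → ℝ} (hGm : StronglyMeasurable[MeasurableSpace.comap B mγ] G)
    (hGi : Integrable G μ) :
    μ[fun ω => (A ⁻¹' s).indicator (fun _ => (1:ℝ)) ω * G ω | m]
      =ᵐ[μ] fun ω => (μ[(A ⁻¹' s).indicator (fun _ => (1:ℝ)) | m]) ω * (μ[G | m]) ω := by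
  set f : Ω → ℝ := (A ⁻¹' s).indicator (fun _ => (1:ℝ)) with hf_def
  have hmB : MeasurableSpace.comap B mγ ≤ mΩ := hB.comap_le
  have hm2 : m ⊔ MeasurableSpace.comap B mγ ≤ mΩ := sup_le hm hmB
  have hAs : MeasurableSet[mΩ] (A ⁻¹' s) := hA hs
  have hf_int : Integrable f μ := (integrable_const (μ := μ) (1:ℝ)).indicator hAs
  have hf_bdd : ∀ᵐ x ∂μ, ‖f x‖ ≤ 1 := Filter.Eventually.of_forall fun x => by
    by_cases hx : x ∈ A ⁻¹' s <;> simp [hf_def, hx]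
  have hGf_int : Integrable (fun ω => G ω * f ω) μ := by
    have := hGi.bdd_mul ((measurable_const.indicator hAs).aestronglyMeasurable) hf_bdd
    simpa [mul_comm] using this
  have key : μ[f | m ⊔ MeasurableSpace.comap B mγ] =ᵐ[μ] μ[f | m] :=
    condexp_indicator_sup_comap_of_condIndepFun hA hB h hs
  have hGm2 : StronglyMeasurable[m ⊔ MeasurableSpace.comap B mγ] G := hGm.mono le_sup_right
  have pull2 : μ[fun ω => G ω * f ω | m ⊔ MeasurableSpace.comap B mγ]
      =ᵐ[μ] fun ω => G ω * (μ[f | m ⊔ MeasurableSpace.comap B mγ]) ω := by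
    have := condExp_mul_of_stronglyMeasurable_left (μ := μ) hGm2 (g := f) hGf_int hf_int
    exact this
  have tower : μ[fun ω => G ω * f ω | m]
      =ᵐ[μ] μ[μ[fun ω => G ω * f ω | m ⊔ MeasurableSpace.comap B mγ] | m] :=
    (condExp_condExp_of_le le_sup_left hm2).symm
  have mid : μ[μ[fun ω => G ω * f ω | m ⊔ MeasurableSpace.comap B mγ] | m]
      =ᵐ[μ] μ[fun ω => (μ[f | m]) ω * G ω | m] := by
    refine condExp_congr_ae ?_
    filter_upwards [pull2, key] with ω h1 h2
    rw [h1, h2, mul_comm]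
  have hfmG_int : Integrable (fun ω => (μ[f | m]) ω * G ω) μ :=
    hGi.bdd_mul (stronglyMeasurable_condExp.mono hm).aestronglyMeasurable
      (condexp_indicator_bdd_one hm hAs)
  have pull1 : μ[fun ω => (μ[f | m]) ω * G ω | m]
      =ᵐ[μ] fun ω => (μ[f | m]) ω * (μ[G | m]) ω := by
    have := condExp_mul_of_stronglyMeasurable_left (μ := μ) (stronglyMeasurable_condExp (f := f))
      (g := G) hfmG_int hGi
    exact this
  have start : (fun ω => f ω * G ω) = fun ω => G ω * f ω := by
    ext ω; ring
  calc μ[fun ω => f ω * G ω | m] = μ[fun ω => G ω * f ω | m] := by rw [start]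
  _ =ᵐ[μ] μ[μ[fun ω => G ω * f ω | m ⊔ MeasurableSpace.comap B mγ] | m] := tower
  _ =ᵐ[μ] μ[fun ω => (μ[f | m]) ω * G ω | m] := mid
  _ =ᵐ[μ] fun ω => (μ[f | m]) ω * (μ[G | m]) ω := pull1

/-- Conditional independence is stable under a.e. modification of the second function. -/
lemma CondIndepFun.ae_eq_right' {hm : m ≤ mΩ} {B' : Ω → γ}
    (h : CondIndepFun m hm A B μ) (hBB' : B =ᵐ[μ] B') :
    CondIndepFun m hm A B' μ := by
  refine Kernel.IndepFun.congr' h (Filter.Eventually.of_forall fun a => ?_) ?_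
  · rfl
  · set N : Set Ω := toMeasurable μ {ω | B ω ≠ B' ω} with hN_def
    have hNmeas : MeasurableSet[mΩ] N := measurableSet_toMeasurable _ _
    have hNnull : μ N = 0 := by
      rw [measure_toMeasurable]
      exact hBB'
    have hcond : μ[N.indicator (fun _ => (1:ℝ)) | m] =ᵐ[μ] (fun _ => (0:ℝ)) := by
      have hind : N.indicator (fun _ => (1:ℝ)) =ᵐ[μ] (fun _ => (0:ℝ)) := by
        rw [Filter.eventuallyEq_iff_exists_mem]
        exact ⟨Nᶜ, by rwa [mem_ae_iff, compl_compl], fun x hx => by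
          simp [Set.indicator_of_notMem hx]⟩
      calc μ[N.indicator (fun _ => (1:ℝ)) | m] =ᵐ[μ] μ[(fun _ => (0:ℝ)) | m] :=
            condExp_congr_ae hind
      _ = fun _ => (0:ℝ) := by simpa using condExp_const hm (0:ℝ) (μ := μ)
    have hker : ∀ᵐ ω ∂(μ.trim hm), condExpKernel μ m ω N = 0 := by
      have h1 := condExpKernel_ae_eq_trim_condExp (μ := μ) hm hNmeas
      have h2 : (μ⟦N | m⟧) =ᵐ[μ.trim hm] (fun _ => (0:ℝ)) := by
        refine (StronglyMeasurable.ae_eq_trim_iff hm stronglyMeasurable_condExp stronglyMeasurable_const).mpr ?_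
        exact hcond
      filter_upwards [h1, h2] with ω hω1 hω2
      have : (condExpKernel μ m ω N).toReal = 0 := by rw [← measureReal_def, hω1, hω2]
      rcases (ENNReal.toReal_eq_zero_iff _).mp this with h0 | htop
      · exact h0
      · exact absurd htop (measure_ne_top _ _)
    filter_upwards [hker] with ω hω
    have : condExpKernel μ m ω {x | B x ≠ B' x} = 0 :=
      measure_mono_null (subset_toMeasurable _ _) hω
    exact this

end AuxLemmas


lemma outcome_difference_factorization_aux
    {Ω : Type*} {m : MeasurableSpace Ω}
    [mΩ : MeasurableSpace Ω] [StandardBorelSpace Ω] [Nonempty Ω]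
    (P : Measure Ω) [IsProbabilityMeasure P]
    (D1 D0 Z1 Z0 Y1 Y0 : Ω → ℝ)
    (hD1 : Measurable D1) (hD0 : Measurable D0)
    (hZ1 : Measurable Z1) (hZ0 : Measurable Z0)
    (hD1b : ∀ ω, D1 ω = 0 ∨ D1 ω = 1) (hD0b : ∀ ω, D0 ω = 0 ∨ D0 ω = 1)
    (hZ1b : ∀ ω, Z1 ω = 0 ∨ Z1 ω = 1) (hZ0b : ∀ ω, Z0 ω = 0 ∨ Z0 ω = 1)
    (hY1 : Integrable Y1 P) (hY0 : Integrable Y0 P)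
    (hm : m ≤ mΩ)
    (Dk1 Dk0 Yk1 Yk0 : Ω → ℝ)
    (hDk1 : Dk1 = fun ω => Z1 ω * D1 ω + (1 - Z1 ω) * D0 ω)
    (hDk0 : Dk0 = fun ω => Z0 ω * D1 ω + (1 - Z0 ω) * D0 ω)
    (hYk1 : Yk1 = fun ω => Dk1 ω * Y1 ω + (1 - Dk1 ω) * Y0 ω)
    (hYk0 : Yk0 = fun ω => Dk0 ω * Y1 ω + (1 - Dk0 ω) * Y0 ω)
    (hindep : CondIndepFun m hm (fun ω => (Z1 ω, Z0 ω))
      (fun ω => (Y1 ω, Y0 ω, D1 ω, D0 ω)) P)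
    (hmono : ∀ᵐ ω ∂P, D0 ω ≤ D1 ω) :
    ∀ᵐ ω ∂P,
      (P[Yk1|m]) ω - (P[Yk0|m]) ω
        = (P[(fun ω => Z1 ω - Z0 ω)|m]) ω
          * (P[(fun ω => (Y1 ω - Y0 ω) * {ω | D0 ω < D1 ω}.indicator (fun _ => (1:ℝ)) ω)|m]) ω := by
  -- measurable modifications of Y1, Y0
  obtain ⟨hY1sm, hY1ae⟩ : StronglyMeasurable (hY1.1.mk Y1) ∧ Y1 =ᵐ[P] hY1.1.mk Y1 :=
    ⟨hY1.1.stronglyMeasurable_mk, hY1.1.ae_eq_mk⟩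
  obtain ⟨hY0sm, hY0ae⟩ : StronglyMeasurable (hY0.1.mk Y0) ∧ Y0 =ᵐ[P] hY0.1.mk Y0 :=
    ⟨hY0.1.stronglyMeasurable_mk, hY0.1.ae_eq_mk⟩
  set Y1' := hY1.1.mk Y1 with hY1'def
  set Y0' := hY0.1.mk Y0 with hY0'def
  have hY1'meas : Measurable Y1' := hY1sm.measurable
  have hY0'meas : Measurable Y0' := hY0sm.measurable
  set A : Ω → ℝ × ℝ := fun ω => (Z1 ω, Z0 ω) with hA_def
  have hA : Measurable A := hZ1.prodMk hZ0
  set B' : Ω → ℝ × ℝ × ℝ × ℝ := fun ω => (Y1' ω, Y0' ω, D1 ω, D0 ω) with hB'_def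
  have hB' : Measurable B' :=
    hY1'meas.prodMk (hY0'meas.prodMk (hD1.prodMk hD0))
  have hBB' : (fun ω => (Y1 ω, Y0 ω, D1 ω, D0 ω)) =ᵐ[P] B' := by
    filter_upwards [hY1ae, hY0ae] with ω h1 h2
    simp only [hB'_def, h1, h2]
  have hindep' : CondIndepFun m hm A B' P := CondIndepFun.ae_eq_right' hindep hBB'
  -- the function G
  set S : Set (ℝ × ℝ × ℝ × ℝ) := {q | q.2.2.2 < q.2.2.1} with hS_def
  have hS : MeasurableSet S :=
    measurableSet_lt (measurable_snd.comp (measurable_snd.comp measurable_snd))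
      (measurable_fst.comp (measurable_snd.comp measurable_snd))
  set ψ : ℝ × ℝ × ℝ × ℝ → ℝ :=
    fun p => (p.1 - p.2.1) * S.indicator (fun _ => (1:ℝ)) p with hψ_def
  have hψ : Measurable ψ :=
    (measurable_fst.sub (measurable_fst.comp measurable_snd)).mul
      (measurable_const.indicator hS)
  set G : Ω → ℝ := fun ω => ψ (B' ω) with hG_def
  have hGm : StronglyMeasurable[MeasurableSpace.comap B' inferInstance] G := by
    have hcom : Measurable[MeasurableSpace.comap B' inferInstance] B' := fun s hs => ⟨s, hs, rfl⟩
    exact (hψ.comp hcom).stronglyMeasurable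
  set Gact : Ω → ℝ :=
    fun ω => (Y1 ω - Y0 ω) * {ω | D0 ω < D1 ω}.indicator (fun _ => (1:ℝ)) ω with hGact_def
  have hind_mem : ∀ ω, {ω | D0 ω < D1 ω}.indicator (fun _ => (1:ℝ)) ω
      = S.indicator (fun _ => (1:ℝ)) (B' ω) := by
    intro ω
    by_cases hω : D0 ω < D1 ω <;>
      simp [Set.indicator_apply, hS_def, hB'_def, hω]
  have hGact_eq : Gact =ᵐ[P] G := by
    filter_upwards [hY1ae, hY0ae] with ω h1 h2
    simp only [hGact_def, hG_def, hψ_def, hB'_def, h1, h2]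
    rw [hind_mem ω]
  have hind_meas : MeasurableSet[mΩ] {ω | D0 ω < D1 ω} := measurableSet_lt hD0 hD1
  have hGact_int : Integrable Gact P := by
    have h1 : Integrable
        (fun ω => {ω | D0 ω < D1 ω}.indicator (fun _ => (1:ℝ)) ω * (Y1 ω - Y0 ω)) P :=
      (hY1.sub hY0).bdd_mul (c := 1) (measurable_const.indicator hind_meas).aestronglyMeasurable
        (Filter.Eventually.of_forall fun ω => by
          by_cases hω : D0 ω < D1 ω <;> simp [Set.indicator_apply, hω])
    have : Gact = fun ω =>
        {ω | D0 ω < D1 ω}.indicator (fun _ => (1:ℝ)) ω * (Y1 ω - Y0 ω) := by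
      funext ω; simp only [hGact_def]; ring
    rw [this]; exact h1
  have hG_int : Integrable G P := hGact_int.congr hGact_eq
  -- indicator representations of Z1, Z0
  set s₁ : Set (ℝ × ℝ) := Prod.fst ⁻¹' {1} with hs₁_def
  set s₂ : Set (ℝ × ℝ) := Prod.snd ⁻¹' {1} with hs₂_def
  have hs₁ : MeasurableSet s₁ := measurable_fst (measurableSet_singleton (1:ℝ))
  have hs₂ : MeasurableSet s₂ := measurable_snd (measurableSet_singleton (1:ℝ))
  have hf₁Z : (A ⁻¹' s₁).indicator (fun _ => (1:ℝ)) = Z1 := by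
    funext ω
    rcases hZ1b ω with h | h
    · rw [Set.indicator_of_notMem, h]
      simp [hA_def, hs₁_def, h]
    · rw [Set.indicator_of_mem, h]
      simp [hA_def, hs₁_def, h]
  have hf₂Z : (A ⁻¹' s₂).indicator (fun _ => (1:ℝ)) = Z0 := by
    funext ω
    rcases hZ0b ω with h | h
    · rw [Set.indicator_of_notMem, h]
      simp [hA_def, hs₂_def, h]
    · rw [Set.indicator_of_mem, h]
      simp [hA_def, hs₂_def, h]
  -- integrability of the pieces
  have hZ1_int : Integrable Z1 P := by
    rw [← hf₁Z]; exact (integrable_const (μ := P) (1:ℝ)).indicator (hA hs₁)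
  have hZ0_int : Integrable Z0 P := by
    rw [← hf₂Z]; exact (integrable_const (μ := P) (1:ℝ)).indicator (hA hs₂)
  have hZ1bdd : ∀ᵐ ω ∂P, ‖Z1 ω‖ ≤ 1 := Filter.Eventually.of_forall fun ω => by
    rcases hZ1b ω with h | h <;> simp [h]
  have hZ0bdd : ∀ᵐ ω ∂P, ‖Z0 ω‖ ≤ 1 := Filter.Eventually.of_forall fun ω => by
    rcases hZ0b ω with h | h <;> simp [h]
  have hf₁G_int : Integrable (fun ω => (A ⁻¹' s₁).indicator (fun _ => (1:ℝ)) ω * G ω) P := by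
    rw [hf₁Z]; exact hG_int.bdd_mul hZ1.aestronglyMeasurable hZ1bdd
  have hf₂G_int : Integrable (fun ω => (A ⁻¹' s₂).indicator (fun _ => (1:ℝ)) ω * G ω) P := by
    rw [hf₂Z]; exact hG_int.bdd_mul hZ0.aestronglyMeasurable hZ0bdd
  -- integrability of Yk1, Yk0
  have hDkb : ∀ (Dk : Ω → ℝ) (Z : Ω → ℝ), (∀ ω, Z ω = 0 ∨ Z ω = 1) →
      (Dk = fun ω => Z ω * D1 ω + (1 - Z ω) * D0 ω) → ∀ ω, Dk ω = 0 ∨ Dk ω = 1 := by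
    intro Dk Z hZb hDk ω
    rcases hZb ω with h | h
    · simpa [hDk, h] using hD0b ω
    · simpa [hDk, h] using hD1b ω
  have hYk_int : ∀ (Yk Dk : Ω → ℝ), Measurable Dk → (∀ ω, Dk ω = 0 ∨ Dk ω = 1) →
      (Yk = fun ω => Dk ω * Y1 ω + (1 - Dk ω) * Y0 ω) → Integrable Yk P := by
    intro Yk Dk hDkm hDkb hYk
    rw [hYk]
    refine Integrable.add ?_ ?_
    · exact hY1.bdd_mul (c := 1) hDkm.aestronglyMeasurable (Filter.Eventually.of_forall fun ω => by
        rcases hDkb ω with h | h <;> simp [h])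
    · exact hY0.bdd_mul (c := 1) (measurable_const.sub hDkm).aestronglyMeasurable
        (Filter.Eventually.of_forall fun ω => by rcases hDkb ω with h | h <;> simp [h])
  have hDk1m : Measurable Dk1 := by
    rw [hDk1]; exact (hZ1.mul hD1).add ((measurable_const.sub hZ1).mul hD0)
  have hDk0m : Measurable Dk0 := by
    rw [hDk0]; exact (hZ0.mul hD1).add ((measurable_const.sub hZ0).mul hD0)
  have hYk1_int : Integrable Yk1 P :=
    hYk_int Yk1 Dk1 hDk1m (hDkb Dk1 Z1 hZ1b hDk1) hYk1
  have hYk0_int : Integrable Yk0 P :=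
    hYk_int Yk0 Dk0 hDk0m (hDkb Dk0 Z0 hZ0b hDk0) hYk0
  -- the condexp identities
  have hsub1 : P[fun ω => Yk1 ω - Yk0 ω|m] =ᵐ[P] fun ω => (P[Yk1|m]) ω - (P[Yk0|m]) ω := by
    have h := condExp_sub (μ := P) (m := m) hYk1_int hYk0_int
    filter_upwards [h] with ω hω
    exact hω
  have hdiff : (fun ω => Yk1 ω - Yk0 ω) =ᵐ[P] fun ω => (Z1 ω - Z0 ω) * G ω := by
    filter_upwards [hmono, hY1ae, hY0ae] with ω hωm h1 h2
    have halg : Yk1 ω - Yk0 ω = (Z1 ω - Z0 ω) * ((D1 ω - D0 ω) * (Y1 ω - Y0 ω)) := by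
      rw [hYk1, hYk0, hDk1, hDk0]; ring
    have hGω : G ω = (Y1 ω - Y0 ω) * S.indicator (fun _ => (1:ℝ)) (B' ω) := by
      simp only [hG_def, hψ_def, hB'_def, ← h1, ← h2]
    rw [halg, hGω]
    rw [Set.indicator_apply]
    rcases hD1b ω with hd1 | hd1 <;> rcases hD0b ω with hd0 | hd0
    · rw [if_neg (by simp [hS_def, hB'_def, hd0, hd1])]
      rw [hd1, hd0]; ring
    · exfalso; rw [hd1, hd0] at hωm; linarith
    · rw [if_pos (by norm_num [hS_def, hB'_def, hd0, hd1])]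
      rw [hd1, hd0]; ring
    · rw [if_neg (by simp [hS_def, hB'_def, hd0, hd1])]
      rw [hd1, hd0]; ring
  have heq2 : P[fun ω => Yk1 ω - Yk0 ω|m] =ᵐ[P] P[fun ω => (Z1 ω - Z0 ω) * G ω|m] :=
    condExp_congr_ae hdiff
  have hsplit : (fun ω => (Z1 ω - Z0 ω) * G ω)
      = fun ω => (A ⁻¹' s₁).indicator (fun _ => (1:ℝ)) ω * G ω
        - (A ⁻¹' s₂).indicator (fun _ => (1:ℝ)) ω * G ω := by
    funext ω
    rw [hf₁Z, hf₂Z]; ring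
  have heq4 := condExp_sub (μ := P) (m := m) hf₁G_int hf₂G_int
  have prod1 := condexp_indicator_mul_of_condIndepFun_s2 hA hB' hindep' hs₁ hGm hG_int
  have prod2 := condexp_indicator_mul_of_condIndepFun_s2 hA hB' hindep' hs₂ hGm hG_int
  have hZsub := condExp_sub (μ := P) (m := m) hZ1_int hZ0_int
  have hGfin : P[G|m] =ᵐ[P] P[Gact|m] := condExp_congr_ae hGact_eq.symm
  have heq3 : P[fun ω => (Z1 ω - Z0 ω) * G ω|m]
      = P[(fun ω => (A ⁻¹' s₁).indicator (fun _ => (1:ℝ)) ω * G ω)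
          - (fun ω => (A ⁻¹' s₂).indicator (fun _ => (1:ℝ)) ω * G ω)|m] := by
    rw [hsplit]; rfl
  have hZeq1 : P[(A ⁻¹' s₁).indicator (fun _ => (1:ℝ))|m] = P[Z1|m] := by rw [hf₁Z]
  have hZeq2 : P[(A ⁻¹' s₂).indicator (fun _ => (1:ℝ))|m] = P[Z0|m] := by rw [hf₂Z]
  have hZsub' : P[(fun ω => Z1 ω - Z0 ω)|m] =ᵐ[P] fun ω => (P[Z1|m]) ω - (P[Z0|m]) ω := by
    filter_upwards [hZsub] with ω hω
    exact hω
  filter_upwards [hsub1, heq2, heq4, prod1, prod2, hZsub', hGfin] with ω e1 e2 e4 p1 p2 ez eg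
  have e4' : (P[(fun ω => (A ⁻¹' s₁).indicator (fun _ => (1:ℝ)) ω * G ω)
          - (fun ω => (A ⁻¹' s₂).indicator (fun _ => (1:ℝ)) ω * G ω)|m]) ω
      = (P[fun ω => (A ⁻¹' s₁).indicator (fun _ => (1:ℝ)) ω * G ω|m]) ω
        - (P[fun ω => (A ⁻¹' s₂).indicator (fun _ => (1:ℝ)) ω * G ω|m]) ω := by
    simpa using e4
  calc (P[Yk1|m]) ω - (P[Yk0|m]) ω
      = (P[fun ω => Yk1 ω - Yk0 ω|m]) ω := e1.symm
    _ = (P[fun ω => (Z1 ω - Z0 ω) * G ω|m]) ω := e2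
    _ = (P[(fun ω => (A ⁻¹' s₁).indicator (fun _ => (1:ℝ)) ω * G ω)
          - (fun ω => (A ⁻¹' s₂).indicator (fun _ => (1:ℝ)) ω * G ω)|m]) ω := by rw [heq3]
    _ = (P[fun ω => (A ⁻¹' s₁).indicator (fun _ => (1:ℝ)) ω * G ω|m]) ω
        - (P[fun ω => (A ⁻¹' s₂).indicator (fun _ => (1:ℝ)) ω * G ω|m]) ω := e4'
    _ = (P[(A ⁻¹' s₁).indicator (fun _ => (1:ℝ))|m]) ω * (P[G|m]) ω
        - (P[(A ⁻¹' s₂).indicator (fun _ => (1:ℝ))|m]) ω * (P[G|m]) ω := by rw [p1, p2]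
    _ = ((P[Z1|m]) ω - (P[Z0|m]) ω) * (P[G|m]) ω := by rw [hZeq1, hZeq2]; ring
    _ = (P[(fun ω => Z1 ω - Z0 ω)|m]) ω * (P[G|m]) ω := by rw [ez]
    _ = (P[(fun ω => Z1 ω - Z0 ω)|m]) ω
        * (P[(fun ω => (Y1 ω - Y0 ω) * {ω | D0 ω < D1 ω}.indicator (fun _ => (1:ℝ)) ω)|m]) ω := by
      rw [eg]

/-- In the two-regime design, under conditional independence of `(Z¹, Z⁰)` and
`(Y₁, Y₀, D₁, D₀)` given `m = σ(X)` and monotonicity `D₀ ≤ D₁` a.s., `P`-a.e.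
`E[Y¹|m] − E[Y⁰|m] = E[Z¹ − Z⁰|m] · E[(Y₁ − Y₀)·1{D₁>D₀}|m]`. -/
theorem outcome_difference_factorization
    {Ω 𝒳 : Type*} [mΩ : MeasurableSpace Ω] [StandardBorelSpace Ω] [Nonempty Ω]
    [MeasurableSpace 𝒳]
    (P : Measure Ω) [IsProbabilityMeasure P]
    (X : Ω → 𝒳) (hX : Measurable X)
    (D1 D0 Z1 Z0 Y1 Y0 : Ω → ℝ)
    (hD1 : Measurable D1) (hD0 : Measurable D0)
    (hZ1 : Measurable Z1) (hZ0 : Measurable Z0)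
    (hD1b : ∀ ω, D1 ω = 0 ∨ D1 ω = 1) (hD0b : ∀ ω, D0 ω = 0 ∨ D0 ω = 1)
    (hZ1b : ∀ ω, Z1 ω = 0 ∨ Z1 ω = 1) (hZ0b : ∀ ω, Z0 ω = 0 ∨ Z0 ω = 1)
    (hY1 : Integrable Y1 P) (hY0 : Integrable Y0 P)
    (m : MeasurableSpace Ω)
    (hm_def : m = MeasurableSpace.comap X inferInstance)
    (hm : m ≤ mΩ)
    (Dk1 Dk0 Yk1 Yk0 : Ω → ℝ)
    (hDk1 : Dk1 = fun ω => Z1 ω * D1 ω + (1 - Z1 ω) * D0 ω)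
    (hDk0 : Dk0 = fun ω => Z0 ω * D1 ω + (1 - Z0 ω) * D0 ω)
    (hYk1 : Yk1 = fun ω => Dk1 ω * Y1 ω + (1 - Dk1 ω) * Y0 ω)
    (hYk0 : Yk0 = fun ω => Dk0 ω * Y1 ω + (1 - Dk0 ω) * Y0 ω)
    (hindep : CondIndepFun m hm (fun ω => (Z1 ω, Z0 ω))
      (fun ω => (Y1 ω, Y0 ω, D1 ω, D0 ω)) P)
    (hmono : ∀ᵐ ω ∂P, D0 ω ≤ D1 ω) :
    ∀ᵐ ω ∂P,
      (P[Yk1|m]) ω - (P[Yk0|m]) ω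
        = (P[(fun ω => Z1 ω - Z0 ω)|m]) ω
          * (P[(fun ω => (Y1 ω - Y0 ω) * {ω | D0 ω < D1 ω}.indicator (fun _ => (1:ℝ)) ω)|m]) ω :=
  outcome_difference_factorization_aux (mΩ := mΩ) P D1 D0 Z1 Z0 Y1 Y0 hD1 hD0 hZ1 hZ0
    hD1b hD0b hZ1b hZ0b hY1 hY0 hm Dk1 Dk0 Yk1 Yk0 hDk1 hDk0 hYk1 hYk0 hindep hmono
end

section
/- Let (Ω, F, P) be a probability space, m = σ(X) the σ-algebra generated by a measurable map X, D₁, D₀, Z¹, Z⁰ : Ω → {0,1} measurable, and Y₁, Y₀ ∈ L¹(P). Define D^k := Z^k·D₁ + (1−Z^k)·D₀ and Y^k := D^k·Y₁ + (1−D^k)·Y₀ for k = 0,1. Assume the pair (Z¹, Z⁰) is conditionally independent of (Y₁, Y₀, D₁, D₀) given m, D₁ ≥ D₀ almost surely, Z⁰ = 0 almost surely (one-experiment two-regime design), and D₀ = 0 almost surely (one-sided noncompliance). Then P-almost everywhere: (i) E[Y⁰ | m] = E[Y₀ | m], and (ii) (E[Y¹ | m] − E[Y⁰ | m]) · E[D₁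 | m] = E[D¹ | m] · E[(Y₁ − Y₀)·D₁ | m]; in particular wherever E[D¹ | m] ≠ 0 and E[D₁ | m] ≠ 0 the local average treatment effect E[(Y₁−Y₀)·D₁ | m]/E[D₁ | m] equals (E[Y¹|m] − E[Y⁰|m]) / E[D¹|m]. -/
open MeasureTheory ProbabilityTheory

lemma indicator_norm_le_one {Ω : Type*} (S : Set Ω) (ω : Ω) :
    ‖S.indicator (fun _ => (1:ℝ)) ω‖ ≤ 1 := by
  by_cases h : ω ∈ S <;> simp [Set.indicator, h]

lemma aux_condExp_indicator_mul
    {Ω : Type*} {m mg : MeasurableSpace Ω} [mΩ : MeasurableSpace Ω]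
    {μ : Measure Ω} [IsProbabilityMeasure μ] (hm : m ≤ mΩ) (hmg : mg ≤ mΩ)
    {A : Set Ω} (hA : MeasurableSet[mΩ] A)
    (hmul : ∀ B : Set Ω, MeasurableSet[mg] B →
      (μ[(A ∩ B).indicator (fun _ => (1:ℝ)) | m]) =ᵐ[μ]
        fun ω => (μ[A.indicator (fun _ => (1:ℝ)) | m]) ω
          * (μ[B.indicator (fun _ => (1:ℝ)) | m]) ω)
    {h : Ω → ℝ} (hh : Integrable h μ) (hhm : StronglyMeasurable[mg] h) :
    (μ[fun ω => A.indicator (fun _ => (1:ℝ)) ω * h ω | m]) =ᵐ[μ]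
      fun ω => (μ[A.indicator (fun _ => (1:ℝ)) | m]) ω * (μ[h | m]) ω := by
  classical
  set χ : Set Ω → Ω → ℝ := fun S => S.indicator (fun _ => (1:ℝ)) with hχ
  set e : Ω → ℝ := μ[χ A | m] with he
  -- basic facts
  have hχint : ∀ {S : Set Ω}, MeasurableSet[mΩ] S → Integrable (χ S) μ :=
    fun hS => (integrable_const (1:ℝ)).indicator hS
  have hχsm : ∀ {S : Set Ω}, MeasurableSet[mΩ] S → StronglyMeasurable[mΩ] (χ S) :=
    fun hS => stronglyMeasurable_const.indicator hS
  have he_sm : StronglyMeasurable[m] e := stronglyMeasurable_condExp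
  have he_bdd : ∀ᵐ ω ∂μ, ‖e ω‖ ≤ 1 := by
    have h0 : (0 : Ω → ℝ) ≤ᵐ[μ] e := condExp_nonneg (Filter.Eventually.of_forall fun ω =>
      Set.indicator_nonneg (fun _ _ => zero_le_one) ω)
    have h1 : e ≤ᵐ[μ] μ[(fun _ => (1:ℝ)) | m] :=
      condExp_mono (hχint hA) (integrable_const 1) (Filter.Eventually.of_forall fun ω =>
        Set.indicator_le' (fun _ _ => le_rfl) (fun _ _ => zero_le_one) ω)
    rw [condExp_const hm] at h1
    filter_upwards [h0, h1] with ω h0 h1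
    simp only [Pi.zero_apply] at h0
    rw [Real.norm_eq_abs, abs_le]
    exact ⟨by linarith, h1⟩
  have heh_int : Integrable (fun ω => e ω * h ω) μ :=
    hh.bdd_mul ((he_sm.mono hm).aestronglyMeasurable) he_bdd
  have hAh_int : Integrable (fun ω => χ A ω * h ω) μ :=
    hh.bdd_mul ((hχsm hA).aestronglyMeasurable)
      (Filter.Eventually.of_forall (indicator_norm_le_one A))
  -- key: for every s ∈ m, ∫_s 1_A h = ∫_s e h
  have key : ∀ s : Set Ω, MeasurableSet[m] s →
      ∫ ω in s, χ A ω * h ω ∂μ = ∫ ω in s, e ω * h ω ∂μ := by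
    intro s hs
    have hsΩ : MeasurableSet[mΩ] s := hm s hs
    set u : Ω → ℝ := fun ω => χ A ω * χ s ω with hu
    set v : Ω → ℝ := fun ω => e ω * χ s ω with hv
    have hu_int : Integrable u μ :=
      (hχint hsΩ).bdd_mul ((hχsm hA).aestronglyMeasurable)
        (Filter.Eventually.of_forall (indicator_norm_le_one A))
    have hv_int : Integrable v μ :=
      (hχint hsΩ).bdd_mul ((he_sm.mono hm).aestronglyMeasurable) he_bdd
    -- Step 2 : μ[v|mg] =ᵐ μ[u|mg]
    have huv : (μ[v | mg]) =ᵐ[μ] μ[u | mg] := by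
      refine ae_eq_condExp_of_forall_setIntegral_eq hmg hu_int
        (fun B hB _ => integrable_condExp.integrableOn)
        (fun B hB _ => ?_) stronglyMeasurable_condExp.aestronglyMeasurable
      have hBΩ : MeasurableSet[mΩ] B := hmg B hB
      rw [setIntegral_condExp hmg hv_int hB]
      have h1 : (μ[χ (A ∩ B) | m]) =ᵐ[μ] μ[fun ω => e ω * χ B ω | m] := by
        refine (hmul B hB).trans ?_
        exact (condExp_mul_of_stronglyMeasurable_left he_sm
          ((hχint hBΩ).bdd_mul ((he_sm.mono hm).aestronglyMeasurable) he_bdd)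
          (hχint hBΩ)).symm
      have h2 : ∫ ω in s, χ (A ∩ B) ω ∂μ = ∫ ω in s, e ω * χ B ω ∂μ := by
        rw [← setIntegral_condExp hm (hχint (hA.inter hBΩ)) hs,
          ← setIntegral_condExp hm
            ((hχint hBΩ).bdd_mul ((he_sm.mono hm).aestronglyMeasurable) he_bdd) hs]
        exact setIntegral_congr_ae hsΩ (h1.mono fun ω hω _ => hω)
      have e1 : ∫ ω in B, v ω ∂μ = ∫ ω in s, e ω * χ B ω ∂μ := by
        rw [← integral_indicator hBΩ, ← integral_indicator hsΩ]
        congr 1; funext ω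
        by_cases hωB : ω ∈ B <;> by_cases hωs : ω ∈ s <;>
          simp [v, χ, Set.indicator, hωB, hωs]
      have e2 : ∫ ω in B, u ω ∂μ = ∫ ω in s, χ (A ∩ B) ω ∂μ := by
        rw [← integral_indicator hBΩ, ← integral_indicator hsΩ]
        congr 1; funext ω
        by_cases hωA : ω ∈ A <;> by_cases hωB : ω ∈ B <;> by_cases hωs : ω ∈ s <;>
          simp [u, χ, Set.indicator, hωA, hωB, hωs]
      rw [e1, e2, h2]
    -- Step 1 : integrate h against u and v
    have hhu_int : Integrable (fun ω => h ω * u ω) μ := by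
      refine (hAh_int.bdd_mul ((hχsm hsΩ).aestronglyMeasurable)
        (Filter.Eventually.of_forall (indicator_norm_le_one s))).congr
        (Filter.Eventually.of_forall fun ω => by simp [u]; ring)
    have hhv_int : Integrable (fun ω => h ω * v ω) μ := by
      refine (heh_int.bdd_mul ((hχsm hsΩ).aestronglyMeasurable)
        (Filter.Eventually.of_forall (indicator_norm_le_one s))).congr
        (Filter.Eventually.of_forall fun ω => by simp [v]; ring)
    have pull_u : (μ[fun ω => h ω * u ω | mg]) =ᵐ[μ] fun ω => h ω * (μ[u | mg]) ω :=
      condExp_mul_of_stronglyMeasurable_left hhm hhu_int hu_int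
    have pull_v : (μ[fun ω => h ω * v ω | mg]) =ᵐ[μ] fun ω => h ω * (μ[v | mg]) ω :=
      condExp_mul_of_stronglyMeasurable_left hhm hhv_int hv_int
    have int_u : ∫ ω, h ω * u ω ∂μ = ∫ ω, h ω * (μ[u|mg]) ω ∂μ := by
      rw [← integral_condExp hmg (f := fun ω => h ω * u ω)]
      exact integral_congr_ae pull_u
    have int_v : ∫ ω, h ω * v ω ∂μ = ∫ ω, h ω * (μ[v|mg]) ω ∂μ := by
      rw [← integral_condExp hmg (f := fun ω => h ω * v ω)]
      exact integral_congr_ae pull_v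
    have huv' : ∫ ω, h ω * (μ[u|mg]) ω ∂μ = ∫ ω, h ω * (μ[v|mg]) ω ∂μ :=
      integral_congr_ae (huv.symm.mono fun ω hω => by dsimp only; rw [hω])
    have final : ∫ ω, h ω * u ω ∂μ = ∫ ω, h ω * v ω ∂μ := by
      rw [int_u, int_v, huv']
    -- convert set integrals to whole-space integrals
    rw [← integral_indicator hsΩ, ← integral_indicator hsΩ]
    calc ∫ ω, s.indicator (fun ω => χ A ω * h ω) ω ∂μ
        = ∫ ω, h ω * u ω ∂μ := by
          congr 1; funext ω
          by_cases hωs : ω ∈ s <;> simp [u, χ, Set.indicator, hωs] <;> ring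
      _ = ∫ ω, h ω * v ω ∂μ := final
      _ = ∫ ω, s.indicator (fun ω => e ω * h ω) ω ∂μ := by
          congr 1; funext ω
          by_cases hωs : ω ∈ s <;> simp [v, χ, Set.indicator, hωs] <;> ring
  -- conclude via uniqueness of conditional expectation
  have : (fun ω => e ω * (μ[h | m]) ω) =ᵐ[μ] μ[fun ω => χ A ω * h ω | m] := by
    have step : (μ[fun ω => e ω * h ω | m]) =ᵐ[μ] fun ω => e ω * (μ[h|m]) ω :=
      condExp_mul_of_stronglyMeasurable_left he_sm heh_int hh
    refine step.symm.trans ?_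
    refine ae_eq_condExp_of_forall_setIntegral_eq hm hAh_int
      (fun s hs _ => integrable_condExp.integrableOn)
      (fun s hs _ => ?_) stronglyMeasurable_condExp.aestronglyMeasurable
    rw [setIntegral_condExp hm heh_int hs]
    exact (key s hs).symm
  exact this.symm

lemma condIndepFun_congr_right
    {Ω β β' : Type*} {m : MeasurableSpace Ω} [mΩ : MeasurableSpace Ω]
    [StandardBorelSpace Ω] {hm : m ≤ mΩ}
    {μ : Measure Ω} [IsProbabilityMeasure μ]
    [MeasurableSpace β] [MeasurableSpace β']
    {f : Ω → β} {g g' : Ω → β'}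
    (hfg : CondIndepFun m hm f g μ) (hgg' : g =ᵐ[μ] g') :
    CondIndepFun m hm f g' μ := by
  refine Kernel.IndepFun.congr' hfg
    (Filter.Eventually.of_forall fun a => Filter.EventuallyEq.rfl) ?_
  obtain ⟨N, hNsub, hNmeas, hNnull⟩ :=
    exists_measurable_superset_of_null (ae_iff.mp hgg')
  have hind0 : (N.indicator (fun _ => (1:ℝ))) =ᵐ[μ] 0 := by
    have : ∀ᵐ ω ∂μ, ω ∉ N := by
      rw [ae_iff]; simpa using hNnull
    filter_upwards [this] with ω hω
    simp [Set.indicator, hω]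
  have hce0 : (μ⟦N | m⟧) =ᵐ[μ] (0 : Ω → ℝ) := by
    refine (condExp_congr_ae hind0).trans ?_
    rw [condExp_zero]
  have hce0' : (μ⟦N | m⟧) =ᵐ[μ.trim hm] (0 : Ω → ℝ) := by
    rw [StronglyMeasurable.ae_eq_trim_iff hm stronglyMeasurable_condExp stronglyMeasurable_zero]
    exact hce0
  have hker : ∀ᵐ a ∂(μ.trim hm), condExpKernel μ m a N = 0 := by
    filter_upwards [condExpKernel_ae_eq_trim_condExp hm hNmeas, hce0'] with a h1 h2
    have htr : (condExpKernel μ m a N).toReal = 0 := by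
      rw [← measureReal_def, h1, h2]; rfl
    have hfin : condExpKernel μ m a N ≠ ⊤ := measure_ne_top _ _
    exact (ENNReal.toReal_eq_zero_iff _).mp htr |>.resolve_right hfin
  filter_upwards [hker] with a ha
  have : (condExpKernel μ m a) {x | ¬ g x = g' x} = 0 :=
    measure_mono_null hNsub ha
  exact ae_iff.mpr this

/-- **LATE identification in the one-experiment two-regime design under one-sided
noncompliance** (Corollary 1). With `Z⁰ = 0` a.s. and `D₀ = 0` a.s., `P`-a.e.:
(i) `E[Y⁰|m] = E[Y₀|m]`, and
(ii) `(E[Y¹|m] − E[Y⁰|m]) · E[D₁|m] = E[D¹|m] · E[(Y₁−Y₀)·D₁|m]`. -/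
theorem late_identification_one_sided
    {Ω 𝒳 : Type*} [mΩ : MeasurableSpace Ω] [StandardBorelSpace Ω] [Nonempty Ω]
    [MeasurableSpace 𝒳]
    (P : Measure Ω) [IsProbabilityMeasure P]
    (X : Ω → 𝒳) (hX : Measurable X)
    (D1 D0 Z1 Z0 Y1 Y0 : Ω → ℝ)
    (hD1 : Measurable D1) (hD0 : Measurable D0)
    (hZ1 : Measurable Z1) (hZ0 : Measurable Z0)
    (hD1b : ∀ ω, D1 ω = 0 ∨ D1 ω = 1) (hD0b : ∀ ω, D0 ω = 0 ∨ D0 ω = 1)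
    (hZ1b : ∀ ω, Z1 ω = 0 ∨ Z1 ω = 1) (hZ0b : ∀ ω, Z0 ω = 0 ∨ Z0 ω = 1)
    (hY1 : Integrable Y1 P) (hY0 : Integrable Y0 P)
    (m : MeasurableSpace Ω)
    (hm_def : m = MeasurableSpace.comap X inferInstance)
    (hm : m ≤ mΩ)
    (Dk1 Dk0 Yk1 Yk0 : Ω → ℝ)
    (hDk1 : Dk1 = fun ω => Z1 ω * D1 ω + (1 - Z1 ω) * D0 ω)
    (hDk0 : Dk0 = fun ω => Z0 ω * D1 ω + (1 - Z0 ω) * D0 ω)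
    (hYk1 : Yk1 = fun ω => Dk1 ω * Y1 ω + (1 - Dk1 ω) * Y0 ω)
    (hYk0 : Yk0 = fun ω => Dk0 ω * Y1 ω + (1 - Dk0 ω) * Y0 ω)
    (hindep : CondIndepFun m hm (fun ω => (Z1 ω, Z0 ω))
      (fun ω => (Y1 ω, Y0 ω, D1 ω, D0 ω)) P)
    (hmono : ∀ᵐ ω ∂P, D0 ω ≤ D1 ω)
    (hZ0zero : ∀ᵐ ω ∂P, Z0 ω = 0)
    (hD0zero : ∀ᵐ ω ∂P, D0 ω = 0) :
    (P[Yk0|m] =ᵐ[P] P[Y0|m])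
      ∧ (∀ᵐ ω ∂P,
          ((P[Yk1|m]) ω - (P[Yk0|m]) ω) * (P[D1|m]) ω
            = (P[Dk1|m]) ω * (P[(fun ω => (Y1 ω - Y0 ω) * D1 ω)|m]) ω) := by
  classical
  -- measurable modifications of Y1 and Y0
  set Y1' : Ω → ℝ := hY1.1.mk Y1 with hY1'def
  set Y0' : Ω → ℝ := hY0.1.mk Y0 with hY0'def
  have hY1'sm : StronglyMeasurable[mΩ] Y1' := hY1.1.stronglyMeasurable_mk
  have hY0'sm : StronglyMeasurable[mΩ] Y0' := hY0.1.stronglyMeasurable_mk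
  have hY1'ae : Y1 =ᵐ[P] Y1' := hY1.1.ae_eq_mk
  have hY0'ae : Y0 =ᵐ[P] Y0' := hY0.1.ae_eq_mk
  have hY1'int : Integrable Y1' P := hY1.congr hY1'ae
  have hY0'int : Integrable Y0' P := hY0.congr hY0'ae
  set fZ : Ω → ℝ × ℝ := fun ω => (Z1 ω, Z0 ω) with hfZdef
  set g4' : Ω → ℝ × ℝ × ℝ × ℝ := fun ω => (Y1' ω, Y0' ω, D1 ω, D0 ω) with hg4'def
  have hfZ : Measurable[mΩ] fZ := hZ1.prodMk hZ0
  have hg4' : Measurable[mΩ] g4' :=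
    hY1'sm.measurable.prodMk (hY0'sm.measurable.prodMk (hD1.prodMk hD0))
  have hgg' : (fun ω => (Y1 ω, Y0 ω, D1 ω, D0 ω)) =ᵐ[P] g4' := by
    filter_upwards [hY1'ae, hY0'ae] with ω h1 h0
    simp [g4', h1, h0]
  have hindep' : CondIndepFun m hm fZ g4' P := condIndepFun_congr_right (mΩ := mΩ) hindep hgg'
  -- the sub-σ-algebra generated by g4'
  set mg : MeasurableSpace Ω := MeasurableSpace.comap g4' inferInstance with hmgdef
  have hmg : mg ≤ mΩ := hg4'.comap_le
  -- the event A = {Z1 = 1}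
  set A : Set Ω := Z1 ⁻¹' {1} with hAdef
  have hA : MeasurableSet[mΩ] A := hZ1 (measurableSet_singleton 1)
  have hAZ : ∀ ω, A.indicator (fun _ => (1:ℝ)) ω = Z1 ω := by
    intro ω
    rcases hZ1b ω with h | h <;>
      simp [A, Set.indicator, Set.mem_preimage, h]
  -- product rule from conditional independence
  have hmul : ∀ B : Set Ω, MeasurableSet[mg] B →
      (P[(A ∩ B).indicator (fun _ => (1:ℝ)) | m]) =ᵐ[P]
        fun ω => (P[A.indicator (fun _ => (1:ℝ)) | m]) ω
          * (P[B.indicator (fun _ => (1:ℝ)) | m]) ω := by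
    intro B hB
    rw [hmgdef, MeasurableSpace.comap] at hB
    obtain ⟨t, ht, rfl⟩ := hB
    have hs1 : MeasurableSet {p : ℝ × ℝ | p.1 = 1} := by
      have : {p : ℝ × ℝ | p.1 = 1} = Prod.fst ⁻¹' {1} := rfl
      rw [this]
      exact measurable_fst (measurableSet_singleton 1)
    have key := (condIndepFun_iff_condExp_inter_preimage_eq_mul hfZ hg4').mp hindep'
      {p : ℝ × ℝ | p.1 = 1} t hs1 ht
    have hpre : fZ ⁻¹' {p : ℝ × ℝ | p.1 = 1} = A := rfl
    rw [hpre] at key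
    exact key
  -- bounds and integrability
  have hD1bd : ∀ᵐ ω ∂P, ‖D1 ω‖ ≤ 1 := Filter.Eventually.of_forall fun ω => by
    rcases hD1b ω with h | h <;> simp [h]
  have hD1int : Integrable D1 P :=
    Integrable.mono' (integrable_const (1:ℝ)) hD1.aestronglyMeasurable hD1bd
  set h : Ω → ℝ := fun ω => (Y1' ω - Y0' ω) * D1 ω with hhdef
  set h₀ : Ω → ℝ := fun ω => (Y1 ω - Y0 ω) * D1 ω with hh₀def
  have hh₀h : h₀ =ᵐ[P] h := by
    filter_upwards [hY1'ae, hY0'ae] with ω h1 h0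
    simp [h, h₀, h1, h0]
  have hhint : Integrable h P := by
    refine ((hY1'int.sub hY0'int).bdd_mul hD1.aestronglyMeasurable hD1bd).congr
      (Filter.Eventually.of_forall fun ω => ?_)
    simp [h, mul_comm]
  have hh₀int : Integrable h₀ P := hhint.congr hh₀h.symm
  -- mg-measurability
  have hg4'mg : Measurable[mg] g4' := measurable_iff_comap_le.mpr le_rfl
  have hhmg : StronglyMeasurable[mg] h := by
    have hφ : Measurable (fun p : ℝ × ℝ × ℝ × ℝ => (p.1 - p.2.1) * p.2.2.1) := by
      fun_prop
    exact (hφ.comp hg4'mg).stronglyMeasurable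
  have hD1mg : StronglyMeasurable[mg] D1 := by
    have hφ : Measurable (fun p : ℝ × ℝ × ℝ × ℝ => p.2.2.1) := by fun_prop
    exact (hφ.comp hg4'mg).stronglyMeasurable
  -- apply the key lemma
  have R1 := aux_condExp_indicator_mul (m := m) (mg := mg) (mΩ := mΩ) hm hmg hA hmul hhint hhmg
  have R2 := aux_condExp_indicator_mul (m := m) (mg := mg) (mΩ := mΩ) hm hmg hA hmul hD1int hD1mg
  set e : Ω → ℝ := P[A.indicator (fun _ => (1:ℝ)) | m] with hedef
  -- part (i)
  have hYk0Y0 : Yk0 =ᵐ[P] Y0 := by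
    filter_upwards [hZ0zero, hD0zero] with ω hz hd
    rw [hYk0, hDk0]
    simp [hz, hd]
  have part1 : P[Yk0|m] =ᵐ[P] P[Y0|m] := condExp_congr_ae hYk0Y0
  -- part (ii)
  have hYk1ae : Yk1 =ᵐ[P] fun ω => Y0 ω + A.indicator (fun _ => (1:ℝ)) ω * h₀ ω := by
    filter_upwards [hD0zero] with ω hd
    rw [hYk1, hDk1]
    simp only [hd, hAZ ω, h₀]
    ring
  have hYk1ae' : Yk1 =ᵐ[P] fun ω => Y0 ω + A.indicator (fun _ => (1:ℝ)) ω * h ω := by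
    refine hYk1ae.trans ?_
    filter_upwards [hh₀h] with ω hω
    rw [hω]
  have hχh_int : Integrable (fun ω => A.indicator (fun _ => (1:ℝ)) ω * h ω) P :=
    hhint.bdd_mul (stronglyMeasurable_const.indicator hA).aestronglyMeasurable
      (Filter.Eventually.of_forall (indicator_norm_le_one A))
  have E1 : P[Yk1|m] =ᵐ[P]
      fun ω => (P[Y0|m]) ω + e ω * (P[h|m]) ω := by
    refine (condExp_congr_ae hYk1ae').trans ?_
    have hadd := condExp_add (μ := P) (m := m) hY0 hχh_int
    refine hadd.trans ?_
    filter_upwards [R1] with ω hω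
    simp only [Pi.add_apply]
    rw [hω]
  have hDk1ae : Dk1 =ᵐ[P] fun ω => A.indicator (fun _ => (1:ℝ)) ω * D1 ω := by
    filter_upwards [hD0zero] with ω hd
    rw [hDk1]
    simp only [hd, hAZ ω]
    ring
  have E2 : P[Dk1|m] =ᵐ[P] fun ω => e ω * (P[D1|m]) ω :=
    (condExp_congr_ae hDk1ae).trans R2
  have Ech : P[h|m] =ᵐ[P] P[h₀|m] := condExp_congr_ae hh₀h.symm
  refine ⟨part1, ?_⟩
  filter_upwards [E1, part1, E2, Ech] with ω e1 e0 e2 ech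
  rw [e1, e0, e2, ← ech]
  ring
end

section
/- Let (Ω, F, P) be a probability space and let π, ν : Ω → ℝ be measurable with π essentially bounded, π ≠ 0 P-almost everywhere, ν ∈ L²(P), and μ₀ := ν/π ∈ L²(P). For f, g ∈ L²(P) define J(f, g) := E[2·(π·f − ν)·g − g²]. Then for every f ∈ L²(P), sup over g ∈ L²(P) of J(f, g) equals E[(π·f − ν)²], and μ₀ is the (P-a.e. unique) minimizer over f ∈ L²(P) of the function f ↦ sup_{g ∈ L²(P)} J(f, g). -/
open MeasureTheory

/-- **Minimax formulation of the direct least squares estimator.** With `π` bounded and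
a.e. nonzero, `ν ∈ L²`, and `μ₀ = ν/π ∈ L²`, for `J(f,g) := E[2(πf − ν)g − g²]`:
for every `f ∈ L²`, `sup_{g ∈ L²} J(f,g) = E[(πf − ν)²]` (and the sup is attained), and
`μ₀` is the a.e. unique minimizer over `f ∈ L²` of `f ↦ sup_{g ∈ L²} J(f,g)`. -/
theorem dls_minimax
    {Ω : Type*} [MeasurableSpace Ω]
    (P : Measure Ω) [IsProbabilityMeasure P]
    (π ν : Ω → ℝ) (hπm : Measurable π) (hνm : Measurable ν)
    (hπbdd : MemLp π ⊤ P)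
    (hπne : ∀ᵐ ω ∂P, π ω ≠ 0)
    (hν : MemLp ν 2 P)
    (μ₀ : Ω → ℝ) (hμ₀_def : μ₀ = fun ω => ν ω / π ω)
    (hμ₀ : MemLp μ₀ 2 P)
    (J : (Ω → ℝ) → (Ω → ℝ) → ℝ)
    (hJ : J = fun f g => ∫ ω, (2 * (π ω * f ω - ν ω) * g ω - g ω ^ 2) ∂P) :
    (∀ f : Ω → ℝ, MemLp f 2 P →
        IsGreatest {x : ℝ | ∃ g : Ω → ℝ, MemLp g 2 P ∧ x = J f g}
          (∫ ω, (π ω * f ω - ν ω) ^ 2 ∂P))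
      ∧ (∀ f : Ω → ℝ, MemLp f 2 P →
          ∫ ω, (π ω * μ₀ ω - ν ω) ^ 2 ∂P ≤ ∫ ω, (π ω * f ω - ν ω) ^ 2 ∂P)
      ∧ (∀ f : Ω → ℝ, MemLp f 2 P →
          ∫ ω, (π ω * f ω - ν ω) ^ 2 ∂P = ∫ ω, (π ω * μ₀ ω - ν ω) ^ 2 ∂P →
            f =ᵐ[P] μ₀) := by
  subst hJ
  -- H f is in L²
  have hH : ∀ f : Ω → ℝ, MemLp f 2 P → MemLp (fun ω => π ω * f ω - ν ω) 2 P := by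
    intro f hf
    exact (hf.smul (p := ⊤) hπbdd).sub hν
  -- the integral of (π μ₀ - ν)² is zero
  have hzero : ∀ᵐ ω ∂P, π ω * μ₀ ω - ν ω = 0 := by
    filter_upwards [hπne] with ω hω
    subst hμ₀_def
    field_simp
    simp
  have hint0 : ∫ ω, (π ω * μ₀ ω - ν ω) ^ 2 ∂P = 0 := by
    rw [integral_congr_ae (g := fun _ => (0:ℝ))]
    · simp
    · filter_upwards [hzero] with ω hω
      simp [hω]
  have hnonneg : ∀ f : Ω → ℝ, 0 ≤ ∫ ω, (π ω * f ω - ν ω) ^ 2 ∂P :=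
    fun f => integral_nonneg fun ω => sq_nonneg _
  refine ⟨?_, ?_, ?_⟩
  · intro f hf
    have hHf := hH f hf
    constructor
    · refine ⟨fun ω => π ω * f ω - ν ω, hHf, ?_⟩
      show _ = ∫ ω, (2 * (π ω * f ω - ν ω) * (π ω * f ω - ν ω) - (π ω * f ω - ν ω) ^ 2) ∂P
      refine integral_congr_ae (Filter.Eventually.of_forall fun ω => ?_)
      ring
    · rintro x ⟨g, hg, rfl⟩
      show (∫ ω, (2 * (π ω * f ω - ν ω) * g ω - g ω ^ 2) ∂P) ≤ _
      have h1 : (fun ω => 2 * (π ω * f ω - ν ω) * g ω - g ω ^ 2)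
          = fun ω => (π ω * f ω - ν ω) ^ 2 - ((π ω * f ω - ν ω) - g ω) ^ 2 := by
        funext ω; ring
      have h2 : Integrable (fun ω => (π ω * f ω - ν ω - g ω) ^ 2) P := by
        simpa using (hHf.sub hg).integrable_sq
      rw [h1, integral_sub hHf.integrable_sq h2]
      have := integral_nonneg (μ := P)
        (f := fun ω => (π ω * f ω - ν ω - g ω) ^ 2) (fun ω => sq_nonneg _)
      linarith
  · intro f hf
    rw [hint0]; exact hnonneg f
  · intro f hf heq
    rw [hint0] at heq
    have hHf := hH f hf
    have h0 : ∀ᵐ ω ∂P, (π ω * f ω - ν ω) ^ 2 = 0 := by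
      have := (integral_eq_zero_iff_of_nonneg_ae
        (Filter.Eventually.of_forall fun ω => sq_nonneg (π ω * f ω - ν ω))
        hHf.integrable_sq).mp heq
      filter_upwards [this] with ω hω
      simpa using hω
    filter_upwards [h0, hπne] with ω hω hπω
    have : π ω * f ω - ν ω = 0 := by
      exact pow_eq_zero_iff (n := 2) (by norm_num) |>.mp hω
    rw [hμ₀_def]
    field_simp
    linarith
end

section
/- Let (Ω, F, P) be a probability space, m ⊆ F a sub-σ-algebra, T, U ∈ L¹(P) bounded random variables, π a version of E[T | m] and ν a version of E[U | m], with π ≠ 0 P-almost everywhere. Let w, f : Ω → ℝ be bounded m-measurable functions, and assume ν is bounded and w·ν²/π is integrable. Then E[(w/π)·(π·f − ν)²] = E[T·w·f²] − 2·E[U·w·f] + E[(w/π)·ν²]. -/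
open MeasureTheory

lemma int_mul_condexp_aux
    {Ω : Type*} [mΩ : MeasurableSpace Ω]
    (P : Measure Ω) [IsProbabilityMeasure P]
    (m : MeasurableSpace Ω) (hm : m ≤ mΩ)
    (T : Ω → ℝ) (hT : Integrable T P)
    (g : Ω → ℝ) (hg : StronglyMeasurable[m] g)
    (hgb : ∃ C, ∀ ω, |g ω| ≤ C) :
    ∫ ω, g ω * T ω ∂P = ∫ ω, g ω * (P[T|m]) ω ∂P := by
  obtain ⟨C, hC⟩ := hgb
  have hgm : AEStronglyMeasurable[mΩ] g P := (hg.mono hm).aestronglyMeasurable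
  have hgT : Integrable (fun ω => g ω * T ω) P :=
    hT.bdd_mul hgm (c := C) (Filter.Eventually.of_forall fun ω => by rw [Real.norm_eq_abs]; exact hC ω)
  have h1 : ∫ ω, (P[fun ω => g ω * T ω|m]) ω ∂P = ∫ ω, g ω * T ω ∂P :=
    integral_condExp hm
  have h2 : P[fun ω => g ω * T ω|m] =ᵐ[P] fun ω => g ω * (P[T|m]) ω := by
    have := condExp_stronglyMeasurable_mul_of_bound hm hg hT C
      (Filter.Eventually.of_forall fun ω => by simpa using hC ω)
    exact this
  rw [← h1, integral_congr_ae h2]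

/-- **Sample-average form of the directly weighted least squares (DWLS) objective.**
With `π = E[T|m]`, `ν = E[U|m]`, `π ≠ 0` a.e., and bounded `m`-measurable weight `w`
and regressor `f`,
`E[(w/π)(π·f − ν)²] = E[T·w·f²] − 2E[U·w·f] + E[(w/π)·ν²]`. -/
theorem dwls_objective_rewrite
    {Ω : Type*} [mΩ : MeasurableSpace Ω]
    (P : Measure Ω) [IsProbabilityMeasure P]
    (m : MeasurableSpace Ω) (hm : m ≤ mΩ)
    (T U : Ω → ℝ) (hT : Integrable T P) (hU : Integrable U P)
    (hTb : ∃ C, ∀ ω, |T ω| ≤ C) (hUb : ∃ C, ∀ ω, |U ω| ≤ C)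
    (π ν : Ω → ℝ)
    (hπ : π =ᵐ[P] P[T|m]) (hν : ν =ᵐ[P] P[U|m])
    (hπne : ∀ᵐ ω ∂P, π ω ≠ 0)
    (w f : Ω → ℝ)
    (hw : Measurable[m] w) (hf : Measurable[m] f)
    (hwb : ∃ C, ∀ ω, |w ω| ≤ C) (hfb : ∃ C, ∀ ω, |f ω| ≤ C)
    (hνb : ∃ C, ∀ ω, |ν ω| ≤ C)
    (hS : Integrable (fun ω => w ω * ν ω ^ 2 / π ω) P) :
    ∫ ω, (w ω / π ω) * (π ω * f ω - ν ω) ^ 2 ∂P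
      = ∫ ω, T ω * w ω * f ω ^ 2 ∂P - 2 * ∫ ω, U ω * w ω * f ω ∂P
        + ∫ ω, (w ω / π ω) * ν ω ^ 2 ∂P := by
  obtain ⟨Cw, hCw⟩ := hwb
  obtain ⟨Cf, hCf⟩ := hfb
  obtain ⟨Cν, hCν⟩ := hνb
  have hπi : Integrable π P := (integrable_condExp).congr hπ.symm
  have hνi : Integrable ν P := (integrable_condExp).congr hν.symm
  -- measurability of auxiliary m-measurable functions
  have hwf2 : StronglyMeasurable[m] (fun ω => w ω * f ω ^ 2) :=
    (hw.stronglyMeasurable.mul (hf.stronglyMeasurable.pow 2))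
  have hwf : StronglyMeasurable[m] (fun ω => w ω * f ω) :=
    hw.stronglyMeasurable.mul hf.stronglyMeasurable
  have hwf2b : ∃ C, ∀ ω, |w ω * f ω ^ 2| ≤ C := by
    refine ⟨Cw * Cf ^ 2, fun ω => ?_⟩
    rw [abs_mul, abs_pow]
    exact mul_le_mul (hCw ω) (pow_le_pow_left₀ (abs_nonneg _) (hCf ω) 2) (by positivity)
      ((abs_nonneg (w ω)).trans (hCw ω))
  have hwfb : ∃ C, ∀ ω, |w ω * f ω| ≤ C := by
    refine ⟨Cw * Cf, fun ω => ?_⟩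
    rw [abs_mul]
    exact mul_le_mul (hCw ω) (hCf ω) (abs_nonneg _) ((abs_nonneg (w ω)).trans (hCw ω))
  -- integrability of the pieces
  have hA : Integrable (fun ω => w ω * f ω ^ 2 * π ω) P := by
    obtain ⟨C, hC⟩ := hwf2b
    exact hπi.bdd_mul ((hwf2.mono hm).aestronglyMeasurable) (c := C) (Filter.Eventually.of_forall fun ω => by rw [Real.norm_eq_abs]; exact hC ω)
  have hB : Integrable (fun ω => w ω * f ω * ν ω) P := by
    obtain ⟨C, hC⟩ := hwfb
    exact hνi.bdd_mul ((hwf.mono hm).aestronglyMeasurable) (c := C) (Filter.Eventually.of_forall fun ω => by rw [Real.norm_eq_abs]; exact hC ω)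
  have hS' : Integrable (fun ω => (w ω / π ω) * ν ω ^ 2) P := by
    refine hS.congr (Filter.Eventually.of_forall fun ω => ?_)
    ring
  -- pointwise a.e. expansion
  have hexp : (fun ω => (w ω / π ω) * (π ω * f ω - ν ω) ^ 2)
      =ᵐ[P] fun ω => w ω * f ω ^ 2 * π ω - 2 * (w ω * f ω * ν ω) + (w ω / π ω) * ν ω ^ 2 := by
    filter_upwards [hπne] with ω hω
    field_simp
    ring
  have hAB : Integrable (fun ω => w ω * f ω ^ 2 * π ω - 2 * (w ω * f ω * ν ω)) P :=
    hA.sub (hB.const_mul 2)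
  rw [integral_congr_ae hexp]
  rw [integral_add hAB hS', integral_sub hA (hB.const_mul 2), MeasureTheory.integral_const_mul]
  -- rewrite using conditional expectation
  have e1 : ∫ ω, w ω * f ω ^ 2 * π ω ∂P = ∫ ω, T ω * w ω * f ω ^ 2 ∂P := by
    have := @int_mul_condexp_aux Ω mΩ P _ m hm T hT _ hwf2 hwf2b
    rw [integral_congr_ae (g := fun ω => w ω * f ω ^ 2 * (P[T|m]) ω)]
    · rw [← this]
      exact integral_congr_ae (Filter.Eventually.of_forall fun ω => by ring)
    · filter_upwards [hπ] with ω hω; rw [hω]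
  have e2 : ∫ ω, w ω * f ω * ν ω ∂P = ∫ ω, U ω * w ω * f ω ∂P := by
    have := @int_mul_condexp_aux Ω mΩ P _ m hm U hU _ hwf hwfb
    rw [integral_congr_ae (g := fun ω => w ω * f ω * (P[U|m]) ω)]
    · rw [← this]
      exact integral_congr_ae (Filter.Eventually.of_forall fun ω => by ring)
    · filter_upwards [hν] with ω hω; rw [hω]
  rw [e1, e2]
end

section
/- Let (Ω, F, P) be a probability space, m ⊆ F a sub-σ-algebra, T, U ∈ L¹(P) bounded random variables, π a version of E[T | m] and ν a version of E[U | m], with π ≠ 0 P-almost everywhere, and set μ₀ := ν/π. Let w be an m-measurable function with w ≠ 0 P-almost everywhere and 1/w bounded, let f : Ω → ℝ be bounded and m-measurable, assume ν is bounded and ν²/(π·w) is integrable. Then E[(π/w)·(f − μ₀)²] = E[T·f²/w] − 2·E[U·f/w] + E[(π/w)·μ₀²]. -/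
open MeasureTheory

/-- **Sample-average form of the inverse weighted least squares (IWLS) objective.**
With `π = E[T|m]`, `ν = E[U|m]`, `π ≠ 0` a.e., `μ₀ = ν/π`, and an `m`-measurable
weight `w` that is a.e. nonzero with bounded inverse,
`E[(π/w)(f − μ₀)²] = E[T·f²/w] − 2E[U·f/w] + E[(π/w)·μ₀²]`. -/
theorem iwls_objective_rewrite
    {Ω : Type*} [mΩ : MeasurableSpace Ω]
    (P : Measure Ω) [IsProbabilityMeasure P]
    (m : MeasurableSpace Ω) (hm : m ≤ mΩ)
    (T U : Ω → ℝ) (hT : Integrable T P) (hU : Integrable U P)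
    (hTb : ∃ C, ∀ ω, |T ω| ≤ C) (hUb : ∃ C, ∀ ω, |U ω| ≤ C)
    (π ν : Ω → ℝ)
    (hπ : π =ᵐ[P] P[T|m]) (hν : ν =ᵐ[P] P[U|m])
    (hπne : ∀ᵐ ω ∂P, π ω ≠ 0)
    (μ₀ : Ω → ℝ) (hμ₀_def : μ₀ = fun ω => ν ω / π ω)
    (w : Ω → ℝ) (hw : Measurable[m] w)
    (hwne : ∀ᵐ ω ∂P, w ω ≠ 0)
    (hwinvb : ∃ C, ∀ ω, |1 / w ω| ≤ C)
    (f : Ω → ℝ) (hf : Measurable[m] f) (hfb : ∃ C, ∀ ω, |f ω| ≤ C)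
    (hνb : ∃ C, ∀ ω, |ν ω| ≤ C)
    (hS' : Integrable (fun ω => ν ω ^ 2 / (π ω * w ω)) P) :
    ∫ ω, (π ω / w ω) * (f ω - μ₀ ω) ^ 2 ∂P
      = ∫ ω, T ω * f ω ^ 2 / w ω ∂P - 2 * ∫ ω, U ω * f ω / w ω ∂P
        + ∫ ω, (π ω / w ω) * μ₀ ω ^ 2 ∂P := by
  obtain ⟨Cf, hCf⟩ := hfb
  obtain ⟨Cw, hCw⟩ := hwinvb
  -- g = f^2 / w, h = f / w : m-measurable and bounded
  set g : Ω → ℝ := fun ω => f ω ^ 2 / w ω with hg_def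
  set h : Ω → ℝ := fun ω => f ω / w ω with hh_def
  have hgm : Measurable[m] g := (hf.pow_const 2).div hw
  have hhm : Measurable[m] h := hf.div hw
  have hgm0 : Measurable[mΩ] g := hgm.mono hm le_rfl
  have hhm0 : Measurable[mΩ] h := hhm.mono hm le_rfl
  have hgb : ∀ ω, ‖g ω‖ ≤ |Cf| ^ 2 * Cw := by
    intro ω
    have : ‖g ω‖ = |f ω| ^ 2 * |1 / w ω| := by
      simp [hg_def, Real.norm_eq_abs, abs_div, sq_abs, div_eq_mul_inv, abs_mul, abs_inv]
    rw [this]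
    have h1 : |f ω| ^ 2 ≤ |Cf| ^ 2 := by
      have := hCf ω
      have : |f ω| ≤ |Cf| := this.trans (le_abs_self _)
      exact pow_le_pow_left₀ (abs_nonneg _) this 2
    exact mul_le_mul h1 (hCw ω) (abs_nonneg _) (by positivity)
  have hhb : ∀ ω, ‖h ω‖ ≤ |Cf| * Cw := by
    intro ω
    have : ‖h ω‖ = |f ω| * |1 / w ω| := by
      simp [hh_def, Real.norm_eq_abs, abs_div, div_eq_mul_inv, abs_mul, abs_inv]
    rw [this]
    exact mul_le_mul ((hCf ω).trans (le_abs_self _)) (hCw ω) (abs_nonneg _) (abs_nonneg _)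
  -- integrabilities
  have hgT : Integrable (g * T) P := hT.bdd_mul hgm0.aestronglyMeasurable (Filter.Eventually.of_forall hgb)
  have hhU : Integrable (h * U) P := hU.bdd_mul hhm0.aestronglyMeasurable (Filter.Eventually.of_forall hhb)
  have hπint : Integrable π P := (integrable_condExp).congr hπ.symm
  have hνint : Integrable ν P := (integrable_condExp).congr hν.symm
  have hgπ : Integrable (g * π) P := hπint.bdd_mul hgm0.aestronglyMeasurable (Filter.Eventually.of_forall hgb)
  have hhν : Integrable (h * ν) P := hνint.bdd_mul hhm0.aestronglyMeasurable (Filter.Eventually.of_forall hhb)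
  -- pull-out identities
  have hTeq : ∫ ω, T ω * f ω ^ 2 / w ω ∂P = ∫ ω, g ω * π ω ∂P := by
    have h1 : ∫ ω, T ω * f ω ^ 2 / w ω ∂P = ∫ ω, (g * T) ω ∂P := by
      refine integral_congr_ae (Filter.Eventually.of_forall fun ω => ?_)
      simp [hg_def]; ring
    rw [h1, ← integral_condExp hm (f := g * T)]
    refine integral_congr_ae ?_
    have := condExp_mul_of_stronglyMeasurable_left hgm.stronglyMeasurable hgT hT
    filter_upwards [this, hπ] with ω h1 h2
    simp only [Pi.mul_apply] at h1 ⊢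
    rw [h1, h2]
  have hUeq : ∫ ω, U ω * f ω / w ω ∂P = ∫ ω, h ω * ν ω ∂P := by
    have h1 : ∫ ω, U ω * f ω / w ω ∂P = ∫ ω, (h * U) ω ∂P := by
      refine integral_congr_ae (Filter.Eventually.of_forall fun ω => ?_)
      simp [hh_def]; ring
    rw [h1, ← integral_condExp hm (f := h * U)]
    refine integral_congr_ae ?_
    have := condExp_mul_of_stronglyMeasurable_left hhm.stronglyMeasurable hhU hU
    filter_upwards [this, hν] with ω h1 h2
    simp only [Pi.mul_apply] at h1 ⊢
    rw [h1, h2]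
  -- last term: (π/w) μ₀² = ν²/(πw) a.e.
  have hlast : (fun ω => (π ω / w ω) * μ₀ ω ^ 2) =ᵐ[P]
      (fun ω => ν ω ^ 2 / (π ω * w ω)) := by
    filter_upwards [hπne, hwne] with ω hπω hwω
    subst hμ₀_def
    field_simp
  have hlastint : Integrable (fun ω => (π ω / w ω) * μ₀ ω ^ 2) P := hS'.congr hlast.symm
  -- main pointwise expansion
  have hmain : (fun ω => (π ω / w ω) * (f ω - μ₀ ω) ^ 2) =ᵐ[P]
      (fun ω => g ω * π ω - 2 * (h ω * ν ω) + (π ω / w ω) * μ₀ ω ^ 2) := by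
    filter_upwards [hπne, hwne] with ω hπω hwω
    subst hμ₀_def
    simp only [hg_def, hh_def]
    field_simp
    ring
  rw [integral_congr_ae hmain, hTeq, hUeq]
  have hA : Integrable (fun ω => g ω * π ω - 2 * (h ω * ν ω)) P := by
    exact hgπ.sub (hhν.const_mul 2)
  have hgπ' : Integrable (fun ω => g ω * π ω) P := hgπ
  have hhν' : Integrable (fun ω => 2 * (h ω * ν ω)) P := hhν.const_mul 2
  rw [integral_add hA hlastint, integral_sub hgπ' hhν', MeasureTheory.integral_const_mul]
end
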